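/- arXiv:1207.5313 — 4 statements merged into one kernel-verified Lean document; each statement's English description precedes it below -/
import Mathlib

section
/- For any vector α in R^{dm} partitioned into d groups of size m, if α lies in the cone C = {α : Σ_{j∉T*} ||α_{G_j}|| ≤ 21 Σ_{j∈T*} ||α_{G_j}||} for a subset T* of {1,...,d} with |T*| = s*, and α is decomposed into groups of indices T_0, T_1, ..., T_L where T_0 contains the s* indices j with largest ||α_{G_j}||, T_1 the next s* largest among the rest, and so on, then Σ_{l=0}^{L} ||α_{G_{T_l}}|| ≤ 23 ||α_{G_{T_0}}||. -/
open Finset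

/-- cone decomposition bound `∑_{l=0}^L ‖α_{G_{T_l}}‖ ≤ 23 ‖α_{G_{T_0}}‖`. -/
theorem stmt_0
    (d m sstar L : ℕ) (hs : 0 < sstar)
    (α : Fin d → Fin m → ℝ)
    (Tstar : Finset (Fin d)) (hTstar : Tstar.card = sstar)
    -- cone condition
    (hcone : ∑ j ∈ Tstarᶜ, Real.sqrt (∑ k, (α j k) ^ 2)
      ≤ 21 * ∑ j ∈ Tstar, Real.sqrt (∑ k, (α j k) ^ 2))
    (T : ℕ → Finset (Fin d))
    -- the T_l, l = 0,...,L, partition {1,...,d}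
    (hdisj : ∀ l l', l ≤ L → l' ≤ L → l ≠ l' → Disjoint (T l) (T l'))
    (hcover : ∀ j : Fin d, ∃ l ≤ L, j ∈ T l)
    -- every group except possibly the last has exactly s* elements
    (hcard : ∀ l < L, (T l).card = sstar)
    (hcardL : (T L).card ≤ sstar)
    -- T_{l+1} consists of blocks no larger (in norm) than those of T_l
    (horder : ∀ l < L, ∀ j ∈ T (l + 1), ∀ j' ∈ T l,
      Real.sqrt (∑ k, (α j k) ^ 2) ≤ Real.sqrt (∑ k, (α j' k) ^ 2))
    -- T_0 consists of the s* largest blocks overall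
    (hmax : ∀ j ∈ T 0, ∀ j' ∉ T 0,
      Real.sqrt (∑ k, (α j' k) ^ 2) ≤ Real.sqrt (∑ k, (α j k) ^ 2)) :
    ∑ l ∈ Finset.range (L + 1), Real.sqrt (∑ j ∈ T l, ∑ k, (α j k) ^ 2)
      ≤ 23 * Real.sqrt (∑ j ∈ T 0, ∑ k, (α j k) ^ 2) := by
  set b : Fin d → ℝ := fun j => Real.sqrt (∑ k, (α j k) ^ 2) with hbdef
  have hb : ∀ j, 0 ≤ b j := fun j => Real.sqrt_nonneg _
  have hb2 : ∀ j, b j ^ 2 = ∑ k, (α j k) ^ 2 := by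
    intro j
    exact Real.sq_sqrt (Finset.sum_nonneg fun k _ => sq_nonneg _)
  have hrw : ∀ s : Finset (Fin d), ∑ j ∈ s, ∑ k, (α j k) ^ 2 = ∑ j ∈ s, b j ^ 2 := by
    intro s; exact (Finset.sum_congr rfl fun j _ => (hb2 j).symm)
  have eL : ∑ l ∈ Finset.range (L + 1), Real.sqrt (∑ j ∈ T l, ∑ k, (α j k) ^ 2)
      = ∑ l ∈ Finset.range (L + 1), Real.sqrt (∑ j ∈ T l, b j ^ 2) :=
    Finset.sum_congr rfl fun l _ => by rw [hrw]
  have e0 : Real.sqrt (∑ j ∈ T 0, ∑ k, (α j k) ^ 2)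
      = Real.sqrt (∑ j ∈ T 0, b j ^ 2) := by rw [hrw]
  rw [eL, e0]
  -- trivial case L = 0
  rcases Nat.eq_zero_or_pos L with hL0 | hLpos
  · subst hL0
    rw [Finset.sum_range_one]
    have h0 : 0 ≤ Real.sqrt (∑ j ∈ T 0, b j ^ 2) := Real.sqrt_nonneg _
    linarith
  have hcard0 : (T 0).card = sstar := hcard 0 hLpos
  have hcard' : ∀ l ≤ L, (T l).card ≤ sstar := by
    intro l hl
    rcases lt_or_eq_of_le hl with h | h
    · exact le_of_eq (hcard l h)
    · subst h; exact hcardL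
  have hsq0 : (0:ℝ) < Real.sqrt sstar := by
    apply Real.sqrt_pos.mpr
    exact_mod_cast hs
  -- Key A : block norm bound
  have keyA : ∀ l < L, Real.sqrt (∑ j ∈ T (l+1), b j ^ 2)
      ≤ (∑ j ∈ T l, b j) / Real.sqrt sstar := by
    intro l hl
    set S := ∑ j ∈ T l, b j with hS
    have hSnn : 0 ≤ S := Finset.sum_nonneg fun j _ => hb j
    have hjb : ∀ j ∈ T (l+1), b j ≤ S / sstar := by
      intro j hj
      have h1 : (T l).card • b j ≤ S :=
        Finset.card_nsmul_le_sum (T l) b (b j) (fun j' hj' => horder l hl j hj j' hj')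
      rw [hcard l hl] at h1
      rw [nsmul_eq_mul] at h1
      rw [le_div_iff₀ (by exact_mod_cast hs)]
      linarith [h1]
    have hsum : ∑ j ∈ T (l+1), b j ^ 2 ≤ (T (l+1)).card • ((S / sstar) ^ 2) := by
      apply Finset.sum_le_card_nsmul
      intro j hj
      exact pow_le_pow_left₀ (hb j) (hjb j hj) 2
    have hc : ((T (l+1)).card : ℝ) ≤ sstar := by
      exact_mod_cast hcard' (l+1) hl
    have hsum2 : ∑ j ∈ T (l+1), b j ^ 2 ≤ S ^ 2 / sstar := by
      rw [nsmul_eq_mul] at hsum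
      have hpos : (0:ℝ) < sstar := by exact_mod_cast hs
      have : ((T (l+1)).card : ℝ) * (S / sstar) ^ 2 ≤ sstar * (S / sstar) ^ 2 :=
        mul_le_mul_of_nonneg_right hc (sq_nonneg _)
      calc ∑ j ∈ T (l+1), b j ^ 2 ≤ ((T (l+1)).card : ℝ) * (S / sstar) ^ 2 := hsum
        _ ≤ sstar * (S / sstar) ^ 2 := this
        _ = S ^ 2 / sstar := by field_simp
    calc Real.sqrt (∑ j ∈ T (l+1), b j ^ 2) ≤ Real.sqrt (S ^ 2 / sstar) :=
          Real.sqrt_le_sqrt hsum2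
      _ = S / Real.sqrt sstar := by
          rw [Real.sqrt_div (sq_nonneg S), Real.sqrt_sq hSnn]
  -- Key B : disjoint union bound
  have keyB : ∑ l ∈ Finset.range L, ∑ j ∈ T l, b j ≤ ∑ j, b j := by
    have hdisj' : (↑(Finset.range L) : Set ℕ).PairwiseDisjoint T := by
      intro l hl l' hl' hne
      simp only [Finset.coe_range, Set.mem_Iio] at hl hl'
      exact hdisj l l' (le_of_lt hl) (le_of_lt hl') hne
    rw [← Finset.sum_biUnion hdisj']
    apply Finset.sum_le_sum_of_subset_of_nonneg (Finset.subset_univ _)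
    intro j _ _
    exact hb j
  -- Key C : cone condition bound
  have keyC : ∑ j, b j ≤ 22 * ∑ j ∈ Tstar, b j := by
    have := Finset.sum_add_sum_compl Tstar b
    have hc : ∑ j ∈ Tstarᶜ, b j ≤ 21 * ∑ j ∈ Tstar, b j := hcone
    linarith
  -- Key D : Cauchy-Schwarz
  have keyD : ∑ j ∈ Tstar, b j ≤ Real.sqrt sstar * Real.sqrt (∑ j ∈ Tstar, b j ^ 2) := by
    have h1 : (∑ j ∈ Tstar, b j) ^ 2 ≤ (sstar : ℝ) * ∑ j ∈ Tstar, b j ^ 2 := by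
      have := sq_sum_le_card_mul_sum_sq (s := Tstar) (f := b)
      rwa [hTstar] at this
    have h2 : ∑ j ∈ Tstar, b j = Real.sqrt ((∑ j ∈ Tstar, b j) ^ 2) :=
      (Real.sqrt_sq (Finset.sum_nonneg fun j _ => hb j)).symm
    rw [h2, ← Real.sqrt_mul (by positivity)]
    exact Real.sqrt_le_sqrt h1
  -- Key E : exchange argument
  have keyE : ∑ j ∈ Tstar, b j ^ 2 ≤ ∑ j ∈ T 0, b j ^ 2 := by
    have hcd : (Tstar \ T 0).card = (T 0 \ Tstar).card := by
      have h1 := Finset.card_inter_add_card_sdiff Tstar (T 0)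
      have h2 := Finset.card_inter_add_card_sdiff (T 0) Tstar
      rw [Finset.inter_comm] at h2
      omega
    have hdiff : ∑ j ∈ Tstar \ T 0, b j ^ 2 ≤ ∑ j ∈ T 0 \ Tstar, b j ^ 2 := by
      rcases Finset.eq_empty_or_nonempty (T 0 \ Tstar) with he | hne
      · have : (Tstar \ T 0) = ∅ := Finset.card_eq_zero.mp (by rw [hcd, he]; simp)
        simp [this, he]
      · obtain ⟨j₀, hj₀, hj₀min⟩ := Finset.exists_min_image (T 0 \ Tstar) b hne
        have hj₀0 : j₀ ∈ T 0 := (Finset.mem_sdiff.mp hj₀).1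
        have hup : ∀ j ∈ Tstar \ T 0, b j ^ 2 ≤ b j₀ ^ 2 := by
          intro j hj
          have hjn : j ∉ T 0 := (Finset.mem_sdiff.mp hj).2
          exact pow_le_pow_left₀ (hb j) (hmax j₀ hj₀0 j hjn) 2
        have h1 : ∑ j ∈ Tstar \ T 0, b j ^ 2 ≤ (Tstar \ T 0).card • (b j₀ ^ 2) :=
          Finset.sum_le_card_nsmul _ _ _ hup
        have h2 : (T 0 \ Tstar).card • (b j₀ ^ 2) ≤ ∑ j ∈ T 0 \ Tstar, b j ^ 2 :=
          Finset.card_nsmul_le_sum _ _ _ (fun j hj =>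
            pow_le_pow_left₀ (hb j₀) (hj₀min j hj) 2)
        rw [hcd] at h1
        exact le_trans h1 h2
    have e1 := Finset.sum_inter_add_sum_sdiff Tstar (T 0) (fun j => b j ^ 2)
    have e2 := Finset.sum_inter_add_sum_sdiff (T 0) Tstar (fun j => b j ^ 2)
    rw [Finset.inter_comm] at e2
    linarith
  -- assemble
  have hN0 : Real.sqrt (∑ j ∈ Tstar, b j ^ 2) ≤ Real.sqrt (∑ j ∈ T 0, b j ^ 2) :=
    Real.sqrt_le_sqrt keyE
  have htail : ∑ l ∈ Finset.range L, Real.sqrt (∑ j ∈ T (l+1), b j ^ 2)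
      ≤ 22 * Real.sqrt (∑ j ∈ T 0, b j ^ 2) := by
    calc ∑ l ∈ Finset.range L, Real.sqrt (∑ j ∈ T (l+1), b j ^ 2)
        ≤ ∑ l ∈ Finset.range L, (∑ j ∈ T l, b j) / Real.sqrt sstar := by
          apply Finset.sum_le_sum
          intro l hl
          exact keyA l (Finset.mem_range.mp hl)
      _ = (∑ l ∈ Finset.range L, ∑ j ∈ T l, b j) / Real.sqrt sstar := by
          rw [Finset.sum_div]
      _ ≤ (∑ j, b j) / Real.sqrt sstar := by
          apply div_le_div_of_nonneg_right keyB hsq0.le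
      _ ≤ (22 * ∑ j ∈ Tstar, b j) / Real.sqrt sstar := by
          apply div_le_div_of_nonneg_right keyC hsq0.le
      _ ≤ (22 * (Real.sqrt sstar * Real.sqrt (∑ j ∈ Tstar, b j ^ 2))) / Real.sqrt sstar := by
          apply div_le_div_of_nonneg_right _ hsq0.le
          linarith [keyD]
      _ = 22 * Real.sqrt (∑ j ∈ Tstar, b j ^ 2) := by
          field_simp
      _ ≤ 22 * Real.sqrt (∑ j ∈ T 0, b j ^ 2) := by linarith [hN0]
  rw [Finset.sum_range_succ']
  linarith [htail]
end

section
/- Let A be a symmetric positive semidefinite dm×dm matrix, and for a subset T ⊆ {1,...,d} let φ(s) = max over subsets T with |T| ≤ s and unit vectors α supported on the blocks indexed by T of ||A^{1/2} α||. Then for any positive integers s and l, φ(l·s)^2 ≤ ⌈l⌉ · φ(s)^2, where ⌈l⌉ is the ceiling. More precisely, for any real l > 0 with ls a positive integer, the group sparse maximum eigenvalue satisfies φ_max(ls)^2 ≤ ⌈l⌉ φ_max(s)^2. -/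
open Finset

/-- sublinearity of the group sparse maximum eigenvalue:
`φ_max(ls)² ≤ ⌈l⌉ φ_max(s)²` whenever `l > 0` and `ls` is a positive integer.
Here `B` plays the role of the square root `A^{1/2}` of a symmetric PSD matrix `A`,
and `φ_max(s)` is the supremum of `‖B α‖` over unit vectors `α` supported on at
most `s` of the `d` blocks of size `m`. -/
theorem stmt_1
    (d m : ℕ)
    (A B : Matrix (Fin d × Fin m) (Fin d × Fin m) ℝ)
    (hA : A.IsSymm) (hApsd : A.PosSemidef) (hB : B * B = A) (hBsymm : B.IsSymm)
    (φ : ℕ → ℝ)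
    (hφ : ∀ s : ℕ, φ s = sSup {r : ℝ |
      ∃ T : Finset (Fin d), T.card ≤ s ∧
      ∃ α : (Fin d × Fin m) → ℝ, (∑ p, (α p) ^ 2 = 1) ∧
        (∀ p : Fin d × Fin m, p.1 ∉ T → α p = 0) ∧
        r = Real.sqrt (∑ p, (B.mulVec α p) ^ 2)})
    (s k : ℕ) (hs : 0 < s) (hk : 0 < k)
    (l : ℝ) (hl : 0 < l) (hls : l * (s : ℝ) = (k : ℝ)) :
    (φ k) ^ 2 ≤ (⌈l⌉ : ℝ) * (φ s) ^ 2 := by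
  classical
  set S : ℕ → Set ℝ := fun t => {r : ℝ |
      ∃ T : Finset (Fin d), T.card ≤ t ∧
      ∃ α : (Fin d × Fin m) → ℝ, (∑ p, (α p) ^ 2 = 1) ∧
        (∀ p : Fin d × Fin m, p.1 ∉ T → α p = 0) ∧
        r = Real.sqrt (∑ p, (B.mulVec α p) ^ 2)} with hS
  have hφS : ∀ t, φ t = sSup (S t) := hφ
  -- the ceiling as a natural number
  have hn0 : (0 : ℤ) < ⌈l⌉ := Int.ceil_pos.2 hl
  set n : ℕ := ⌈l⌉.toNat with hndef
  have hnZ : (n : ℤ) = ⌈l⌉ := Int.toNat_of_nonneg hn0.le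
  have hnpos : 0 < n := by omega
  have hnR : ((⌈l⌉ : ℤ) : ℝ) = (n : ℝ) := by exact_mod_cast hnZ.symm
  have hkns : k ≤ n * s := by
    have h1 : (k : ℝ) ≤ (n : ℝ) * (s : ℝ) := by
      rw [← hls, ← hnR]
      exact mul_le_mul_of_nonneg_right (Int.le_ceil l) (Nat.cast_nonneg s)
    exact_mod_cast h1
  -- boundedness of the sets
  have hBdd : ∀ t, BddAbove (S t) := by
    intro t
    refine ⟨Real.sqrt (∑ p, ∑ q, (B p q) ^ 2), ?_⟩
    rintro r ⟨T, hT, α, hα1, hα0, rfl⟩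
    apply Real.sqrt_le_sqrt
    apply Finset.sum_le_sum
    intro p _
    calc (B.mulVec α p) ^ 2 = (∑ q, B p q * α q) ^ 2 := rfl
      _ ≤ (∑ q, (B p q) ^ 2) * (∑ q, (α q) ^ 2) :=
          Finset.sum_mul_sq_le_sq_mul_sq _ _ _
      _ = ∑ q, (B p q) ^ 2 := by rw [hα1, mul_one]
  have hmemnn : ∀ t, ∀ r ∈ S t, (0 : ℝ) ≤ r := by
    rintro t r ⟨T, hT, α, hα1, hα0, rfl⟩
    exact Real.sqrt_nonneg _
  have hφnn : ∀ t, 0 ≤ φ t := by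
    intro t; rw [hφS]; exact Real.sSup_nonneg (hmemnn t)
  -- key pointwise bound
  have hkey : ∀ r ∈ S k, r ^ 2 ≤ (n : ℝ) * (φ s) ^ 2 := by
    rintro r ⟨T, hT, α, hα1, hα0, rfl⟩
    have hcard : Fintype.card {x // x ∈ T} ≤ Fintype.card (Fin n × Fin s) := by
      simpa [Fintype.card_coe] using hT.trans hkns
    obtain ⟨f⟩ := Function.Embedding.nonempty_of_card_le hcard
    set g : Fin d → Fin n := fun x => if h : x ∈ T then (f ⟨x, h⟩).1 else ⟨0, hnpos⟩ with hg
    set β : Fin n → (Fin d × Fin m) → ℝ := fun i p => if g p.1 = i then α p else 0 with hβ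
    have hβsum : ∀ p, ∑ i, β i p = α p := by
      intro p
      simp only [hβ]
      rw [Finset.sum_ite_eq]
      simp
    have hmv : ∀ p, B.mulVec α p = ∑ i, B.mulVec (β i) p := by
      intro p
      simp only [Matrix.mulVec, dotProduct]
      rw [Finset.sum_comm]
      apply Finset.sum_congr rfl
      intro q _
      rw [← Finset.mul_sum, hβsum]
    set c : Fin n → ℝ := fun i => ∑ p, (β i p) ^ 2 with hc
    have hc0 : ∀ i, 0 ≤ c i := fun i => Finset.sum_nonneg fun p _ => sq_nonneg _
    have hc1 : ∑ i, c i = 1 := by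
      simp only [hc]
      rw [Finset.sum_comm, ← hα1]
      apply Finset.sum_congr rfl
      intro p _
      simp [hβ, apply_ite (· ^ 2 : ℝ → ℝ), Finset.sum_ite_eq]
    have hblock : ∀ i, ∑ p, (B.mulVec (β i) p) ^ 2 ≤ c i * (φ s) ^ 2 := by
      intro i
      rcases eq_or_lt_of_le (hc0 i) with h0 | hpos
      · have hz : ∀ p, β i p = 0 := by
          intro p
          have h := (Finset.sum_eq_zero_iff_of_nonneg
            (fun p _ => sq_nonneg (β i p))).1 h0.symm p (Finset.mem_univ p)
          exact pow_eq_zero_iff (two_ne_zero) |>.1 h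
        have hmz : ∀ p, B.mulVec (β i) p = 0 := by
          intro p; simp [Matrix.mulVec, dotProduct, hz]
        rw [← h0]
        simp [hmz]
      · set γ : (Fin d × Fin m) → ℝ := fun p => β i p / Real.sqrt (c i) with hγ
        have hsne : Real.sqrt (c i) ≠ 0 := (Real.sqrt_pos.2 hpos).ne'
        have hγ1 : ∑ p, (γ p) ^ 2 = 1 := by
          simp only [hγ, div_pow, Real.sq_sqrt (hc0 i)]
          rw [← Finset.sum_div]
          exact div_self hpos.ne'
        have hγ0 : ∀ p : Fin d × Fin m,
            p.1 ∉ T.filter (fun x => g x = i) → γ p = 0 := by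
          intro p hp
          simp only [Finset.mem_filter, not_and] at hp
          by_cases hpT : p.1 ∈ T
          · have hgi : g p.1 ≠ i := hp hpT
            simp [hγ, hβ, hgi]
          · simp [hγ, hβ, hα0 p hpT]
        have hTcard : (T.filter (fun x => g x = i)).card ≤ s := by
          have := Finset.card_le_card_of_injOn
            (f := fun x : Fin d => if h : x ∈ T then (f ⟨x, h⟩).2 else ⟨0, hs⟩)
            (fun x _ => Finset.mem_univ _)
            (s := T.filter (fun x => g x = i)) (t := (Finset.univ : Finset (Fin s)))
            ?_
          · simpa using this
          · intro x hx y hy hxy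
            simp only [Finset.coe_filter, Set.mem_setOf_eq] at hx hy
            obtain ⟨hxT, hgx⟩ := hx
            obtain ⟨hyT, hgy⟩ := hy
            have hxy2 : (f ⟨x, hxT⟩).2 = (f ⟨y, hyT⟩).2 := by
              simpa [dif_pos hxT, dif_pos hyT] using hxy
            have hfx1 : (f ⟨x, hxT⟩).1 = i := by
              have hgx' : g x = (f ⟨x, hxT⟩).1 := by simp [hg, dif_pos hxT]
              rw [← hgx', hgx]
            have hfy1 : (f ⟨y, hyT⟩).1 = i := by
              have hgy' : g y = (f ⟨y, hyT⟩).1 := by simp [hg, dif_pos hyT]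
              rw [← hgy', hgy]
            have : f ⟨x, hxT⟩ = f ⟨y, hyT⟩ := by
              apply Prod.ext
              · rw [hfx1, hfy1]
              · exact hxy2
            have := f.injective this
            exact congrArg Subtype.val this
        have hγmem : Real.sqrt (∑ p, (B.mulVec γ p) ^ 2) ∈ S s :=
          ⟨T.filter (fun x => g x = i), hTcard, γ, hγ1, hγ0, rfl⟩
        have hγle : Real.sqrt (∑ p, (B.mulVec γ p) ^ 2) ≤ φ s := by
          rw [hφS]; exact le_csSup (hBdd s) hγmem
        have hγsq : ∑ p, (B.mulVec γ p) ^ 2 ≤ (φ s) ^ 2 := by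
          have h0 : 0 ≤ ∑ p, (B.mulVec γ p) ^ 2 :=
            Finset.sum_nonneg fun p _ => sq_nonneg _
          calc ∑ p, (B.mulVec γ p) ^ 2
              = (Real.sqrt (∑ p, (B.mulVec γ p) ^ 2)) ^ 2 := (Real.sq_sqrt h0).symm
            _ ≤ (φ s) ^ 2 := by
                apply pow_le_pow_left₀ (Real.sqrt_nonneg _) hγle
        have hrel : ∀ p, B.mulVec (β i) p = Real.sqrt (c i) * B.mulVec γ p := by
          intro p
          simp only [Matrix.mulVec, dotProduct, hγ]
          rw [Finset.mul_sum]
          apply Finset.sum_congr rfl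
          intro q _
          field_simp
        calc ∑ p, (B.mulVec (β i) p) ^ 2
            = ∑ p, c i * (B.mulVec γ p) ^ 2 := by
              apply Finset.sum_congr rfl
              intro p _
              rw [hrel, mul_pow, Real.sq_sqrt (hc0 i)]
          _ = c i * ∑ p, (B.mulVec γ p) ^ 2 := (Finset.mul_sum _ _ _).symm
          _ ≤ c i * (φ s) ^ 2 := mul_le_mul_of_nonneg_left hγsq (hc0 i)
    have hsum0 : 0 ≤ ∑ p, (B.mulVec α p) ^ 2 :=
      Finset.sum_nonneg fun p _ => sq_nonneg _
    rw [Real.sq_sqrt hsum0]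
    calc ∑ p, (B.mulVec α p) ^ 2
        = ∑ p, (∑ i, B.mulVec (β i) p) ^ 2 := by
          apply Finset.sum_congr rfl; intro p _; rw [hmv]
      _ ≤ ∑ p, (n : ℝ) * ∑ i, (B.mulVec (β i) p) ^ 2 := by
          apply Finset.sum_le_sum
          intro p _
          simpa using sq_sum_le_card_mul_sum_sq
            (s := (Finset.univ : Finset (Fin n))) (f := fun i => B.mulVec (β i) p)
      _ = (n : ℝ) * ∑ i, ∑ p, (B.mulVec (β i) p) ^ 2 := by
          rw [← Finset.mul_sum, Finset.sum_comm]
      _ ≤ (n : ℝ) * ∑ i, c i * (φ s) ^ 2 := by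
          apply mul_le_mul_of_nonneg_left _ (Nat.cast_nonneg n)
          exact Finset.sum_le_sum fun i _ => hblock i
      _ = (n : ℝ) * (φ s) ^ 2 := by
          rw [← Finset.sum_mul, hc1, one_mul]
  -- conclude
  rw [hnR]
  by_cases hne : (S k).Nonempty
  · have hle : φ k ≤ Real.sqrt ((n : ℝ) * (φ s) ^ 2) := by
      rw [hφS]
      apply csSup_le hne
      intro r hr
      calc r = Real.sqrt (r ^ 2) := (Real.sqrt_sq (hmemnn k r hr)).symm
        _ ≤ Real.sqrt ((n : ℝ) * (φ s) ^ 2) := Real.sqrt_le_sqrt (hkey r hr)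
    have h2 : (φ k) ^ 2 ≤ (Real.sqrt ((n : ℝ) * (φ s) ^ 2)) ^ 2 :=
      pow_le_pow_left₀ (hφnn k) hle 2
    rwa [Real.sq_sqrt (by positivity)] at h2
  · rw [hφS, Set.not_nonempty_iff_eq_empty.1 hne, Real.sSup_empty]
    simpa using mul_nonneg (Nat.cast_nonneg n) (sq_nonneg (φ s))
end

section
/- Let Σ̂ and Σ be symmetric positive semidefinite dm×dm matrices (with R^{dm} partitioned into d blocks of size m), let C be the cone {α ∈ R^{dm} : Σ_{j∉T*} ||α_{G_j}|| ≤ 21 Σ_{j∈T*} ||α_{G_j}||} for a fixed set T* with |T*| = s*, and define κ̂ = min_{α ∈ S^{dm-1} ∩ C} ||Σ̂^{1/2} α|| and κ = min_{α ∈ S^{dm-1} ∩ C} ||Σ^{1/2} α||. Then |κ̂² − κ²| ≤ 23² · max_{|T| ≤ 2s*} ||Σ̂_T − Σ_T||, where Σ̂_T and Σ_T denote the principal submatrices corresponding to the blocks in T and ||·|| the operator norm. -/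
open Finset Matrix


namespace Stmt2Aux

variable {d m : ℕ}

noncomputable def nrm (x : (Fin d × Fin m) → ℝ) : ℝ := Real.sqrt (∑ p, (x p)^2)

noncomputable def blk (x : (Fin d × Fin m) → ℝ) (j : Fin d) : ℝ :=
  Real.sqrt (∑ k, (x (j,k))^2)

def restr (x : (Fin d × Fin m) → ℝ) (T : Finset (Fin d)) : (Fin d × Fin m) → ℝ :=
  fun p => if p.1 ∈ T then x p else 0

lemma nrm_nonneg (x : (Fin d × Fin m) → ℝ) : 0 ≤ nrm x := Real.sqrt_nonneg _
lemma blk_nonneg (x : (Fin d × Fin m) → ℝ) (j : Fin d) : 0 ≤ blk x j := Real.sqrt_nonneg _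

lemma sq_nrm (x : (Fin d × Fin m) → ℝ) : (nrm x)^2 = ∑ p, (x p)^2 :=
  Real.sq_sqrt (Finset.sum_nonneg fun _ _ => sq_nonneg _)

lemma sq_blk (x : (Fin d × Fin m) → ℝ) (j : Fin d) : (blk x j)^2 = ∑ k, (x (j,k))^2 :=
  Real.sq_sqrt (Finset.sum_nonneg fun _ _ => sq_nonneg _)

lemma sum_sq_eq (x : (Fin d × Fin m) → ℝ) : ∑ p, (x p)^2 = ∑ j, (blk x j)^2 := by
  rw [Fintype.sum_prod_type]
  exact Finset.sum_congr rfl fun j _ => (sq_blk x j).symm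

lemma restr_support (x : (Fin d × Fin m) → ℝ) (T : Finset (Fin d)) :
    ∀ p : Fin d × Fin m, p.1 ∉ T → restr x T p = 0 := by
  intro p hp; simp [restr, hp]

lemma blk_restr_mem (x : (Fin d × Fin m) → ℝ) {T : Finset (Fin d)} {j : Fin d}
    (hj : j ∈ T) : blk (restr x T) j = blk x j := by
  unfold blk restr; simp [hj]

lemma blk_eq_zero_of_support {x : (Fin d × Fin m) → ℝ} {S : Finset (Fin d)}
    (hx : ∀ p : Fin d × Fin m, p.1 ∉ S → x p = 0) {j : Fin d} (hj : j ∉ S) :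
    blk x j = 0 := by
  unfold blk
  have : ∀ k : Fin m, x (j,k) = 0 := fun k => hx (j,k) hj
  simp [this]

lemma nrm_sq_of_support {x : (Fin d × Fin m) → ℝ} {S : Finset (Fin d)}
    (hx : ∀ p : Fin d × Fin m, p.1 ∉ S → x p = 0) :
    (nrm x)^2 = ∑ j ∈ S, (blk x j)^2 := by
  rw [sq_nrm, sum_sq_eq]
  refine (Finset.sum_subset (Finset.subset_univ S) ?_).symm
  intro j _ hj
  rw [blk_eq_zero_of_support hx hj]; ring

/-- existence of the `k` largest elements -/
lemma exists_top (S : Finset (Fin d)) (f : Fin d → ℝ) :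
    ∀ k : ℕ, k ≤ S.card →
    ∃ T ⊆ S, T.card = k ∧ ∀ j ∈ T, ∀ i ∈ S \ T, f i ≤ f j := by
  intro k
  induction k with
  | zero => intro _; exact ⟨∅, Finset.empty_subset S, rfl, by simp⟩
  | succ n ih =>
    intro hk
    obtain ⟨T, hTS, hTcard, hTtop⟩ := ih (Nat.le_of_succ_le hk)
    have hne : (S \ T).Nonempty := by
      rw [← Finset.card_pos, Finset.card_sdiff_of_subset hTS, hTcard]
      omega
    obtain ⟨j₀, hj₀, hj₀max⟩ := Finset.exists_max_image (S \ T) f hne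
    have hj₀T : j₀ ∉ T := (Finset.mem_sdiff.1 hj₀).2
    refine ⟨insert j₀ T, ?_, ?_, ?_⟩
    · exact Finset.insert_subset (Finset.mem_sdiff.1 hj₀).1 hTS
    · rw [Finset.card_insert_of_notMem hj₀T, hTcard]
    · intro j hj i hi
      have hi' : i ∈ S \ T := by
        rcases Finset.mem_sdiff.1 hi with ⟨hiS, hiT⟩
        exact Finset.mem_sdiff.2 ⟨hiS, fun h => hiT (Finset.mem_insert_of_mem h)⟩
      rcases Finset.mem_insert.1 hj with rfl | hj
      · exact hj₀max i hi'
      · exact hTtop j hj i hi'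

lemma B_comm {Δ : Matrix (Fin d × Fin m) (Fin d × Fin m) ℝ} (hΔ : Δᵀ = Δ)
    (x y : (Fin d × Fin m) → ℝ) : x ⬝ᵥ Δ *ᵥ y = y ⬝ᵥ Δ *ᵥ x := by
  rw [Matrix.dotProduct_mulVec, ← Matrix.mulVec_transpose, hΔ, dotProduct_comm]


lemma arith_amgm {t b A v : ℝ} (ht : 0 < t) (hb : 0 ≤ b) (hA : 0 ≤ A) (hv : 0 ≤ v)
    (h : v^2 ≤ b * A) : v ≤ t*b + A/t := by
  have key : t*b*(A/t) = b*A := by field_simp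
  have hX : 0 ≤ t*b := mul_nonneg ht.le hb
  have hY : 0 ≤ A/t := div_nonneg hA ht.le
  nlinarith [sq_nonneg (t*b - A/t), sq_nonneg (t*b + A/t - v), mul_nonneg hX hY]

lemma mul_mul_le_of_le_one {a b M : ℝ} (ha0 : 0 ≤ a) (ha : a ≤ 1)
    (hb0 : 0 ≤ b) (hb : b ≤ 1) (hM : 0 ≤ M) : a * b * M ≤ M := by
  nlinarith [mul_nonneg ha0 hb0, mul_le_one₀ ha hb0 hb]

lemma arith_sqle {a w : ℝ} (ha : 0 ≤ a) (hw : 0 ≤ w) (h : a^2 ≤ w^2) : a ≤ w := by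
  nlinarith

section MainInd

variable (sstar : ℕ) (Δ : Matrix (Fin d × Fin m) (Fin d × Fin m) ℝ) (M : ℝ)

/-- base case: `S.card ≤ sstar` -/
lemma main_base (hs : 1 ≤ sstar) (hM : 0 ≤ M)
    (hb : ∀ (x y : (Fin d × Fin m) → ℝ) (Tx Ty : Finset (Fin d)),
      Tx.card ≤ sstar → Ty.card ≤ sstar →
      (∀ p : Fin d × Fin m, p.1 ∉ Tx → x p = 0) →
      (∀ p : Fin d × Fin m, p.1 ∉ Ty → y p = 0) →
      |x ⬝ᵥ Δ *ᵥ y| ≤ nrm x * nrm y * M)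
    (S : Finset (Fin d)) (hS : S.card ≤ sstar)
    (y : (Fin d × Fin m) → ℝ) (hy : ∀ p : Fin d × Fin m, p.1 ∉ S → y p = 0)
    (b : ℝ) (hb0 : 0 ≤ b) (hby : ∀ j ∈ S, blk y j ≤ b) :
    (∀ (x : (Fin d × Fin m) → ℝ) (Tx : Finset (Fin d)), Tx.card ≤ sstar →
        (∀ p : Fin d × Fin m, p.1 ∉ Tx → x p = 0) →
        |x ⬝ᵥ Δ *ᵥ y| ≤ nrm x * (Real.sqrt sstar * b + (∑ j ∈ S, blk y j)/Real.sqrt sstar) * M)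
      ∧ |y ⬝ᵥ Δ *ᵥ y| ≤ (Real.sqrt sstar * b + (∑ j ∈ S, blk y j)/Real.sqrt sstar)^2 * M := by
  set t : ℝ := Real.sqrt sstar with htdef
  have hspos : (0:ℝ) < (sstar:ℝ) := by exact_mod_cast hs
  have ht : 0 < t := Real.sqrt_pos.2 hspos
  have ht2 : t^2 = (sstar:ℝ) := Real.sq_sqrt hspos.le
  have hSig0 : 0 ≤ ∑ j ∈ S, blk y j := Finset.sum_nonneg fun j _ => blk_nonneg y j
  set w : ℝ := t * b + (∑ j ∈ S, blk y j)/t with hwdef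
  have hw0 : 0 ≤ w :=
    add_nonneg (mul_nonneg ht.le hb0) (div_nonneg hSig0 ht.le)
  have hny : nrm y ≤ w := by
    have h1 : (nrm y)^2 = ∑ j ∈ S, (blk y j)^2 := nrm_sq_of_support hy
    have h2 : ∑ j ∈ S, (blk y j)^2 ≤ b * ∑ j ∈ S, blk y j := by
      rw [Finset.mul_sum]
      refine Finset.sum_le_sum fun j hj => ?_
      have := hby j hj; have := blk_nonneg y j; nlinarith
    exact arith_amgm ht hb0 hSig0 (nrm_nonneg y) (h1 ▸ h2)
  constructor
  · intro x Tx hTx hx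
    calc |x ⬝ᵥ Δ *ᵥ y| ≤ nrm x * nrm y * M := hb x y Tx S hTx hS hx hy
      _ ≤ nrm x * w * M :=
        mul_le_mul_of_nonneg_right (mul_le_mul_of_nonneg_left hny (nrm_nonneg x)) hM
  · calc |y ⬝ᵥ Δ *ᵥ y| ≤ nrm y * nrm y * M := hb y y S S hS hS hy hy
      _ ≤ w * w * M :=
        mul_le_mul_of_nonneg_right
          (mul_le_mul hny hny (nrm_nonneg y) hw0) hM
      _ = w^2 * M := by ring

lemma main_ind (hs : 1 ≤ sstar) (hΔ : Δᵀ = Δ) (hM : 0 ≤ M)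
    (hb : ∀ (x y : (Fin d × Fin m) → ℝ) (Tx Ty : Finset (Fin d)),
      Tx.card ≤ sstar → Ty.card ≤ sstar →
      (∀ p : Fin d × Fin m, p.1 ∉ Tx → x p = 0) →
      (∀ p : Fin d × Fin m, p.1 ∉ Ty → y p = 0) →
      |x ⬝ᵥ Δ *ᵥ y| ≤ nrm x * nrm y * M) :
    ∀ (n : ℕ) (S : Finset (Fin d)), S.card ≤ n →
    ∀ (y : (Fin d × Fin m) → ℝ), (∀ p : Fin d × Fin m, p.1 ∉ S → y p = 0) →
    ∀ b : ℝ, 0 ≤ b → (∀ j ∈ S, blk y j ≤ b) →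
      (∀ (x : (Fin d × Fin m) → ℝ) (Tx : Finset (Fin d)), Tx.card ≤ sstar →
        (∀ p : Fin d × Fin m, p.1 ∉ Tx → x p = 0) →
        |x ⬝ᵥ Δ *ᵥ y| ≤ nrm x * (Real.sqrt sstar * b + (∑ j ∈ S, blk y j)/Real.sqrt sstar) * M)
      ∧ |y ⬝ᵥ Δ *ᵥ y| ≤ (Real.sqrt sstar * b + (∑ j ∈ S, blk y j)/Real.sqrt sstar)^2 * M := by
  intro n
  induction n with
  | zero =>
    intro S hScard y hy b hb0 hby
    exact main_base sstar Δ M hs hM hb S (le_trans hScard (Nat.zero_le _)) y hy b hb0 hby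
  | succ n ih =>
    intro S hScard y hy b hb0 hby
    by_cases hSsmall : S.card ≤ sstar
    · exact main_base sstar Δ M hs hM hb S hSsmall y hy b hb0 hby
    push_neg at hSsmall
    -- main splitting step
    set t : ℝ := Real.sqrt sstar with htdef
    have hspos : (0:ℝ) < (sstar:ℝ) := by exact_mod_cast hs
    have ht : 0 < t := Real.sqrt_pos.2 hspos
    have ht2 : t^2 = (sstar:ℝ) := Real.sq_sqrt hspos.le
    obtain ⟨T1, hT1S, hT1card, hT1top⟩ := exists_top S (blk y) sstar hSsmall.le
    set S' := S \ T1 with hS'def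
    set z := restr y T1 with hzdef
    set r := restr y S' with hrdef
    have hzsupp : ∀ p : Fin d × Fin m, p.1 ∉ T1 → z p = 0 := restr_support y T1
    have hrsupp : ∀ p : Fin d × Fin m, p.1 ∉ S' → r p = 0 := restr_support y S'
    have hysplit : y = z + r := by
      funext p
      by_cases h1 : p.1 ∈ T1
      · have h2 : p.1 ∉ S' := by simp [hS'def, h1]
        simp [hzdef, hrdef, restr, h1, h2]
      · by_cases h2 : p.1 ∈ S
        · have h3 : p.1 ∈ S' := Finset.mem_sdiff.2 ⟨h2, h1⟩
          simp [hzdef, hrdef, restr, h1, h3]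
        · have h4 : p.1 ∉ S' := fun hc => h2 (Finset.mem_sdiff.1 hc).1
          simp [hzdef, hrdef, restr, h1, h4, hy p h2]
    set b' : ℝ := (∑ j ∈ T1, blk y j) / (sstar : ℝ) with hb'def
    have hSig1 : 0 ≤ ∑ j ∈ T1, blk y j := Finset.sum_nonneg fun j _ => blk_nonneg y j
    have hb'0 : 0 ≤ b' := div_nonneg hSig1 hspos.le
    have hblkr : ∀ j ∈ S', blk r j ≤ b' := by
      intro j hj
      rw [blk_restr_mem y hj]
      have hsum : (sstar:ℝ) * blk y j ≤ ∑ i ∈ T1, blk y i := by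
        calc (sstar:ℝ) * blk y j = ∑ _i ∈ T1, blk y j := by
              rw [Finset.sum_const, hT1card, nsmul_eq_mul]
          _ ≤ ∑ i ∈ T1, blk y i := Finset.sum_le_sum fun i hi => hT1top i hi j hj
      rw [hb'def, le_div_iff₀ hspos]
      linarith
    have hS'card : S'.card ≤ n := by
      rw [hS'def, Finset.card_sdiff_of_subset hT1S, hT1card]
      omega
    obtain ⟨IH1, IH2⟩ := ih S' hS'card r hrsupp b' hb'0 hblkr
    -- rewrite the sums
    have hsum' : ∑ j ∈ S', blk r j = ∑ j ∈ S', blk y j :=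
      Finset.sum_congr rfl fun j hj => blk_restr_mem y hj
    have hsplitS : ∑ j ∈ S', blk y j + ∑ j ∈ T1, blk y j = ∑ j ∈ S, blk y j :=
      Finset.sum_sdiff hT1S
    have hw' : t * b' + (∑ j ∈ S', blk r j)/t = (∑ j ∈ S, blk y j)/t := by
      rw [hsum', hb'def, ← hsplitS, ← ht2]
      field_simp
      ring
    set c : ℝ := (∑ j ∈ S, blk y j)/t with hcdef
    have hSigS : 0 ≤ ∑ j ∈ S, blk y j := Finset.sum_nonneg fun j _ => blk_nonneg y j
    have hc0 : 0 ≤ c := div_nonneg hSigS ht.le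
    rw [hw'] at IH1 IH2
    -- nrm z ≤ t * b
    have hnz : nrm z ≤ t * b := by
      have h1 : (nrm z)^2 = ∑ j ∈ T1, (blk z j)^2 := nrm_sq_of_support hzsupp
      have h2 : ∑ j ∈ T1, (blk z j)^2 ≤ (sstar:ℝ) * b^2 := by
        calc ∑ j ∈ T1, (blk z j)^2 ≤ ∑ _j ∈ T1, b^2 := by
              refine Finset.sum_le_sum fun j hj => ?_
              rw [blk_restr_mem y hj]
              have := hby j (hT1S hj); have := blk_nonneg y j
              nlinarith
          _ = (sstar:ℝ) * b^2 := by rw [Finset.sum_const, hT1card, nsmul_eq_mul]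
      have h3 : (nrm z)^2 ≤ (t*b)^2 := by
        rw [h1]
        calc ∑ j ∈ T1, (blk z j)^2 ≤ (sstar:ℝ) * b^2 := h2
          _ = (t*b)^2 := by rw [← ht2]; ring
      exact arith_sqle (nrm_nonneg z) (mul_nonneg ht.le hb0) h3
    have hT1le : T1.card ≤ sstar := le_of_eq hT1card
    constructor
    · intro x Tx hTx hx
      have e : x ⬝ᵥ Δ *ᵥ y = x ⬝ᵥ Δ *ᵥ z + x ⬝ᵥ Δ *ᵥ r := by
        rw [hysplit, Matrix.mulVec_add, dotProduct_add]
      calc |x ⬝ᵥ Δ *ᵥ y| ≤ |x ⬝ᵥ Δ *ᵥ z| + |x ⬝ᵥ Δ *ᵥ r| := e ▸ abs_add_le _ _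
        _ ≤ nrm x * nrm z * M + nrm x * c * M :=
          add_le_add (hb x z Tx T1 hTx hT1le hx hzsupp) (IH1 x Tx hTx hx)
        _ ≤ nrm x * (t*b) * M + nrm x * c * M := by
          have hmono : nrm x * nrm z * M ≤ nrm x * (t*b) * M :=
            mul_le_mul_of_nonneg_right
              (mul_le_mul_of_nonneg_left hnz (nrm_nonneg x)) hM
          linarith
        _ = nrm x * (t * b + c) * M := by ring
    · have e2 : y ⬝ᵥ Δ *ᵥ y =
          (z ⬝ᵥ Δ *ᵥ z + r ⬝ᵥ Δ *ᵥ z) + (z ⬝ᵥ Δ *ᵥ r + r ⬝ᵥ Δ *ᵥ r) := by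
        rw [hysplit, Matrix.mulVec_add, dotProduct_add,
          add_dotProduct, add_dotProduct]
      have hcomm : r ⬝ᵥ Δ *ᵥ z = z ⬝ᵥ Δ *ᵥ r := B_comm hΔ r z
      have A1 : |z ⬝ᵥ Δ *ᵥ z| ≤ nrm z * nrm z * M := hb z z T1 T1 hT1le hT1le hzsupp hzsupp
      have A2 : |z ⬝ᵥ Δ *ᵥ r| ≤ nrm z * c * M := IH1 z T1 hT1le hzsupp
      have A3 : |r ⬝ᵥ Δ *ᵥ z| ≤ nrm z * c * M := by rw [hcomm]; exact A2
      have A4 : |r ⬝ᵥ Δ *ᵥ r| ≤ c^2 * M := IH2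
      have habs : |y ⬝ᵥ Δ *ᵥ y| ≤
          (|z ⬝ᵥ Δ *ᵥ z| + |r ⬝ᵥ Δ *ᵥ z|) + (|z ⬝ᵥ Δ *ᵥ r| + |r ⬝ᵥ Δ *ᵥ r|) := by
        rw [e2]
        exact (abs_add_le _ _).trans (add_le_add (abs_add_le _ _) (abs_add_le _ _))
      have hnz0 := nrm_nonneg z
      have htb : 0 ≤ t * b := mul_nonneg ht.le hb0
      have B1 : nrm z * nrm z * M ≤ (t*b)*(t*b)*M :=
        mul_le_mul_of_nonneg_right (mul_le_mul hnz hnz hnz0 htb) hM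
      have B2 : nrm z * c * M ≤ (t*b)*c*M :=
        mul_le_mul_of_nonneg_right (mul_le_mul_of_nonneg_right hnz hc0) hM
      have hring : (t*b)*(t*b)*M + (t*b)*c*M + ((t*b)*c*M + c^2*M) = (t*b+c)^2*M := by
        ring
      linarith
end MainInd

end Stmt2Aux


open Stmt2Aux in
set_option maxHeartbeats 2000000 in
/-- stability of the restricted eigenvalue:
`|κ̂² − κ²| ≤ 23² · max_{|T| ≤ 2s*} ‖Σ̂_T − Σ_T‖`.
Here `κ̂²` and `κ²` are the infima of the quadratic forms `α ↦ α' Σ̂ α`, `α ↦ α' Σ α`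
over unit vectors `α ∈ ℝ^{dm}` in the cone `C`, and for `T ⊆ {1,…,d}` the operator
norm of the principal submatrix `Σ̂_T − Σ_T` is formalized as the supremum of
`|α'(Σ̂ − Σ)β|` over unit vectors `α, β` supported on the blocks in `T`. -/
theorem stmt_2
    (d m sstar : ℕ)
    (Shat Spop : Matrix (Fin d × Fin m) (Fin d × Fin m) ℝ)
    (hShat : Shat.PosSemidef) (hSpop : Spop.PosSemidef)
    (Tstar : Finset (Fin d)) (hTstar : Tstar.card = sstar)
    -- the cone C
    (C : Set ((Fin d × Fin m) → ℝ))
    (hC : C = {α | ∑ j ∈ Tstarᶜ, Real.sqrt (∑ k, (α (j, k)) ^ 2)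
      ≤ 21 * ∑ j ∈ Tstar, Real.sqrt (∑ k, (α (j, k)) ^ 2)})
    (κhatSq κSq : ℝ)
    (hκhat : κhatSq = sInf {r : ℝ | ∃ α ∈ C, (∑ p, (α p) ^ 2 = 1) ∧
      r = α ⬝ᵥ Shat.mulVec α})
    (hκ : κSq = sInf {r : ℝ | ∃ α ∈ C, (∑ p, (α p) ^ 2 = 1) ∧
      r = α ⬝ᵥ Spop.mulVec α})
    (N : Finset (Fin d) → ℝ)
    (hN : ∀ T : Finset (Fin d), N T = sSup {r : ℝ |
      ∃ α β : (Fin d × Fin m) → ℝ,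
        (∀ p : Fin d × Fin m, p.1 ∉ T → α p = 0) ∧
        (∀ p : Fin d × Fin m, p.1 ∉ T → β p = 0) ∧
        (∑ p, (α p) ^ 2 = 1) ∧ (∑ p, (β p) ^ 2 = 1) ∧
        r = |α ⬝ᵥ ((Shat - Spop).mulVec β)|}) :
    |κhatSq - κSq| ≤ 23 ^ 2 * sSup {r : ℝ |
      ∃ T : Finset (Fin d), T.card ≤ 2 * sstar ∧ r = N T} := by
  
  classical
  set Δ := Shat - Spop with hΔdef
  have hherm : Δ.IsHermitian := hShat.1.sub hSpop.1
  have hΔT : Δᵀ = Δ := by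
    ext i j
    rw [Matrix.transpose_apply]
    have h0 := congrFun (congrFun hherm i) j
    simpa [Matrix.conjTranspose_apply] using h0
  set M : ℝ := sSup {r : ℝ | ∃ T : Finset (Fin d), T.card ≤ 2 * sstar ∧ r = N T}
    with hMdef
  -- a uniform bound for all the inner sup sets
  set K : ℝ := ∑ p : Fin d × Fin m, ∑ q : Fin d × Fin m, |Δ p q| with hKdef
  have hK0 : 0 ≤ K := Finset.sum_nonneg fun p _ =>
    Finset.sum_nonneg fun q _ => abs_nonneg _
  have habs_le_one : ∀ (α : (Fin d × Fin m) → ℝ), (∑ p, (α p) ^ 2 = 1) →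
      ∀ p, |α p| ≤ 1 := by
    intro α hα p
    have h1 : (α p)^2 ≤ 1 := by
      rw [← hα]
      exact Finset.single_le_sum (f := fun p => (α p)^2)
        (fun i _ => sq_nonneg _) (Finset.mem_univ p)
    have := abs_nonneg (α p)
    nlinarith [sq_abs (α p)]
  have hinner : ∀ (T : Finset (Fin d)), ∀ r ∈ {r : ℝ |
      ∃ α β : (Fin d × Fin m) → ℝ,
        (∀ p : Fin d × Fin m, p.1 ∉ T → α p = 0) ∧
        (∀ p : Fin d × Fin m, p.1 ∉ T → β p = 0) ∧
        (∑ p, (α p) ^ 2 = 1) ∧ (∑ p, (β p) ^ 2 = 1) ∧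
        r = |α ⬝ᵥ (Δ.mulVec β)|}, r ≤ K := by
    rintro T r ⟨α, β, hα, hβ, hα1, hβ1, rfl⟩
    calc |α ⬝ᵥ Δ *ᵥ β| ≤ ∑ p, |α p * (Δ *ᵥ β) p| := by
          rw [dotProduct]
          exact Finset.abs_sum_le_sum_abs _ _
      _ ≤ K := by
        rw [hKdef]
        refine Finset.sum_le_sum fun p _ => ?_
        rw [abs_mul]
        calc |α p| * |(Δ *ᵥ β) p| ≤ 1 * |(Δ *ᵥ β) p| :=
              mul_le_mul_of_nonneg_right (habs_le_one α hα1 p) (abs_nonneg _)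
          _ = |∑ q, Δ p q * β q| := by rw [one_mul, Matrix.mulVec, dotProduct]
          _ ≤ ∑ q, |Δ p q * β q| := Finset.abs_sum_le_sum_abs _ _
          _ ≤ ∑ q, |Δ p q| := by
            refine Finset.sum_le_sum fun q _ => ?_
            rw [abs_mul]
            calc |Δ p q| * |β q| ≤ |Δ p q| * 1 :=
                  mul_le_mul_of_nonneg_left (habs_le_one β hβ1 q) (abs_nonneg _)
              _ = |Δ p q| := mul_one _
  have hNle : ∀ T : Finset (Fin d), N T ≤ K := by
    intro T
    rw [hN T]
    exact Real.sSup_le (hinner T) hK0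
  have hbddM : BddAbove {r : ℝ | ∃ T : Finset (Fin d), T.card ≤ 2 * sstar ∧ r = N T} := by
    refine ⟨K, ?_⟩
    rintro r ⟨T, _, rfl⟩
    exact hNle T
  have hNempty : N (∅ : Finset (Fin d)) = 0 := by
    rw [hN]
    have hempty : {r : ℝ |
        ∃ α β : (Fin d × Fin m) → ℝ,
          (∀ p : Fin d × Fin m, p.1 ∉ (∅ : Finset (Fin d)) → α p = 0) ∧
          (∀ p : Fin d × Fin m, p.1 ∉ (∅ : Finset (Fin d)) → β p = 0) ∧
          (∑ p, (α p) ^ 2 = 1) ∧ (∑ p, (β p) ^ 2 = 1) ∧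
          r = |α ⬝ᵥ (Δ.mulVec β)|} = (∅ : Set ℝ) := by
      ext r
      simp only [Set.mem_setOf_eq, Set.mem_empty_iff_false, iff_false]
      rintro ⟨α, β, hα, hβ, hα1, hβ1, rfl⟩
      have hz : ∀ p : Fin d × Fin m, α p = 0 := fun p =>
        hα p (Finset.notMem_empty _)
      have : (1:ℝ) = 0 := by
        rw [← hα1]
        exact Finset.sum_eq_zero fun p _ => by rw [hz p]; ring
      norm_num at this
    rw [hempty, Real.sSup_empty]
  have hM0 : 0 ≤ M :=
    le_csSup hbddM ⟨∅, Nat.zero_le _, hNempty.symm⟩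
  have hNM : ∀ T : Finset (Fin d), T.card ≤ 2 * sstar → N T ≤ M := fun T hT =>
    le_csSup hbddM ⟨T, hT, rfl⟩
  -- the key bilinear bound
  have hbkey : ∀ (x y : (Fin d × Fin m) → ℝ) (Tx Ty : Finset (Fin d)),
      Tx.card ≤ sstar → Ty.card ≤ sstar →
      (∀ p : Fin d × Fin m, p.1 ∉ Tx → x p = 0) →
      (∀ p : Fin d × Fin m, p.1 ∉ Ty → y p = 0) →
      |x ⬝ᵥ Δ *ᵥ y| ≤ nrm x * nrm y * M := by
    intro x y Tx Ty hTx hTy hx hy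
    by_cases hx0 : ∑ p, (x p)^2 = 0
    · have hz : ∀ p, x p = 0 := by
        intro p
        have h1 := (Finset.sum_eq_zero_iff_of_nonneg
          (fun p _ => sq_nonneg (x p))).1 hx0 p (Finset.mem_univ p)
        exact pow_eq_zero_iff (two_ne_zero) |>.1 h1
      have hzero : x ⬝ᵥ Δ *ᵥ y = 0 := by
        rw [dotProduct]
        exact Finset.sum_eq_zero fun p _ => by rw [hz p]; ring
      rw [hzero, abs_zero]
      exact mul_nonneg (mul_nonneg (nrm_nonneg x) (nrm_nonneg y)) hM0
    by_cases hy0 : ∑ p, (y p)^2 = 0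
    · have hz : ∀ p, y p = 0 := by
        intro p
        have h1 := (Finset.sum_eq_zero_iff_of_nonneg
          (fun p _ => sq_nonneg (y p))).1 hy0 p (Finset.mem_univ p)
        exact pow_eq_zero_iff (two_ne_zero) |>.1 h1
      have hy' : y = 0 := funext hz
      have hzero : x ⬝ᵥ Δ *ᵥ y = 0 := by
        rw [hy', Matrix.mulVec_zero, dotProduct_zero]
      rw [hzero, abs_zero]
      exact mul_nonneg (mul_nonneg (nrm_nonneg x) (nrm_nonneg y)) hM0
    have hxpos : 0 < ∑ p, (x p)^2 :=
      lt_of_le_of_ne (Finset.sum_nonneg fun p _ => sq_nonneg _) (Ne.symm hx0)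
    have hypos : 0 < ∑ p, (y p)^2 :=
      lt_of_le_of_ne (Finset.sum_nonneg fun p _ => sq_nonneg _) (Ne.symm hy0)
    have hnx : 0 < nrm x := Real.sqrt_pos.2 hxpos
    have hny : 0 < nrm y := Real.sqrt_pos.2 hypos
    set a : (Fin d × Fin m) → ℝ := fun p => x p / nrm x with hadef
    set bb : (Fin d × Fin m) → ℝ := fun p => y p / nrm y with hbbdef
    have hax : x = nrm x • a := by
      funext p
      simp [hadef, Pi.smul_apply, smul_eq_mul, mul_div_cancel₀ _ hnx.ne']
    have hby' : y = nrm y • bb := by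
      funext p
      simp [hbbdef, Pi.smul_apply, smul_eq_mul, mul_div_cancel₀ _ hny.ne']
    have ha1 : ∑ p, (a p)^2 = 1 := by
      simp only [hadef, div_pow]
      rw [← Finset.sum_div]
      rw [show (nrm x)^2 = ∑ p, (x p)^2 from sq_nrm x] at *
      exact div_self hx0
    have hb1 : ∑ p, (bb p)^2 = 1 := by
      simp only [hbbdef, div_pow]
      rw [← Finset.sum_div]
      rw [show (nrm y)^2 = ∑ p, (y p)^2 from sq_nrm y] at *
      exact div_self hy0
    have hasupp : ∀ p : Fin d × Fin m, p.1 ∉ Tx ∪ Ty → a p = 0 := by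
      intro p hp
      have : p.1 ∉ Tx := fun h => hp (Finset.mem_union_left _ h)
      simp [hadef, hx p this]
    have hbsupp : ∀ p : Fin d × Fin m, p.1 ∉ Tx ∪ Ty → bb p = 0 := by
      intro p hp
      have : p.1 ∉ Ty := fun h => hp (Finset.mem_union_right _ h)
      simp [hbbdef, hy p this]
    have hcard : (Tx ∪ Ty).card ≤ 2 * sstar := by
      have := Finset.card_union_le Tx Ty
      omega
    have h1 : |a ⬝ᵥ Δ *ᵥ bb| ≤ N (Tx ∪ Ty) := by
      rw [hN]
      exact le_csSup ⟨K, hinner (Tx ∪ Ty)⟩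
        ⟨a, bb, hasupp, hbsupp, ha1, hb1, rfl⟩
    have h2 : N (Tx ∪ Ty) ≤ M := hNM _ hcard
    have hval : |x ⬝ᵥ Δ *ᵥ y| = nrm x * nrm y * |a ⬝ᵥ Δ *ᵥ bb| := by
      conv_lhs => rw [hax, hby']
      rw [Matrix.mulVec_smul, smul_dotProduct, dotProduct_smul,
        smul_eq_mul, smul_eq_mul, abs_mul, abs_mul,
        abs_of_nonneg (nrm_nonneg x), abs_of_nonneg (nrm_nonneg y)]
      ring
    rw [hval]
    exact mul_le_mul_of_nonneg_left (h1.trans h2)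
      (mul_nonneg (nrm_nonneg x) (nrm_nonneg y))
  -- feasibility cases
  by_cases hA : ∃ α ∈ C, ∑ p, (α p)^2 = 1
  · obtain ⟨α₀, hα₀C, hα₀1⟩ := hA
    -- sstar ≥ 1
    have hs : 1 ≤ sstar := by
      by_contra hss
      have hs0 : sstar = 0 := by omega
      have hTe : Tstar = ∅ := Finset.card_eq_zero.1 (by rw [hTstar, hs0])
      rw [hC] at hα₀C
      have hcone : ∑ j ∈ Tstarᶜ, blk α₀ j ≤ 21 * ∑ j ∈ Tstar, blk α₀ j := hα₀C
      rw [hTe] at hcone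
      simp only [Finset.compl_empty, Finset.sum_empty, mul_zero] at hcone
      have hble : ∀ j : Fin d, blk α₀ j = 0 := by
        intro j
        have h1 : 0 ≤ blk α₀ j := blk_nonneg α₀ j
        have h2 : ∑ j : Fin d, blk α₀ j ≤ 0 := hcone
        have := Finset.single_le_sum (f := fun j => blk α₀ j)
          (fun i _ => blk_nonneg α₀ i) (Finset.mem_univ j)
        linarith
      have : (1:ℝ) = 0 := by
        rw [← hα₀1, sum_sq_eq]
        exact Finset.sum_eq_zero fun j _ => by rw [hble j]; ring
      norm_num at this
    set t : ℝ := Real.sqrt sstar with htdef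
    have hspos : (0:ℝ) < (sstar:ℝ) := by exact_mod_cast hs
    have ht : 0 < t := Real.sqrt_pos.2 hspos
    have ht2 : t^2 = (sstar:ℝ) := Real.sq_sqrt hspos.le
    -- the key quadratic estimate on the cone
    have hkeyest : ∀ α, α ∈ C → (∑ p, (α p)^2 = 1) → |α ⬝ᵥ Δ *ᵥ α| ≤ 529 * M := by
      intro α hαC hα1
      rw [hC] at hαC
      have hcone : ∑ j ∈ Tstarᶜ, blk α j ≤ 21 * ∑ j ∈ Tstar, blk α j := hαC
      have hblksum : ∑ j : Fin d, (blk α j)^2 = 1 := by rw [← sum_sq_eq, hα1]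
      have hsubnrm : ∀ T : Finset (Fin d), nrm (restr α T) ≤ 1 := by
        intro T
        refine arith_sqle (nrm_nonneg _) zero_le_one ?_
        rw [nrm_sq_of_support (restr_support α T), one_pow]
        calc ∑ j ∈ T, (blk (restr α T) j)^2 = ∑ j ∈ T, (blk α j)^2 :=
              Finset.sum_congr rfl fun j hj => by rw [blk_restr_mem α hj]
          _ ≤ ∑ j : Fin d, (blk α j)^2 :=
              Finset.sum_le_sum_of_subset_of_nonneg (Finset.subset_univ T)
                (fun j _ _ => sq_nonneg _)
          _ = 1 := hblksum
      have hsumT : ∑ j ∈ Tstar, blk α j ≤ t := by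
        refine arith_sqle (Finset.sum_nonneg fun j _ => blk_nonneg α j) ht.le ?_
        calc (∑ j ∈ Tstar, blk α j)^2 ≤ (Tstar.card : ℝ) * ∑ j ∈ Tstar, (blk α j)^2 :=
              sq_sum_le_card_mul_sum_sq
          _ ≤ (sstar : ℝ) * 1 := by
              rw [hTstar]
              refine mul_le_mul_of_nonneg_left ?_ hspos.le
              calc ∑ j ∈ Tstar, (blk α j)^2 ≤ ∑ j : Fin d, (blk α j)^2 :=
                    Finset.sum_le_sum_of_subset_of_nonneg (Finset.subset_univ _)
                      (fun j _ _ => sq_nonneg _)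
                _ = 1 := hblksum
          _ = t^2 := by rw [ht2, mul_one]
      have hconeC : ∑ j ∈ Tstarᶜ, blk α j ≤ 21 * t := by
        calc ∑ j ∈ Tstarᶜ, blk α j ≤ 21 * ∑ j ∈ Tstar, blk α j := hcone
          _ ≤ 21 * t := by linarith
      set g := restr α Tstar with hgdef
      have hgsupp : ∀ p : Fin d × Fin m, p.1 ∉ Tstar → g p = 0 := restr_support α Tstar
      have hTstarcard : Tstar.card ≤ sstar := le_of_eq hTstar
      by_cases hcc : (Tstarᶜ : Finset (Fin d)).card ≤ sstar
      · -- small complement: just four terms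
        set y := restr α Tstarᶜ with hydef
        have hysupp : ∀ p : Fin d × Fin m, p.1 ∉ Tstarᶜ → y p = 0 := restr_support α _
        have hsplit : α = g + y := by
          funext p
          by_cases h1 : p.1 ∈ Tstar
          · have h2 : p.1 ∉ Tstarᶜ := by simp [h1]
            simp [hgdef, hydef, restr, h1, h2]
          · have h2 : p.1 ∈ Tstarᶜ := Finset.mem_compl.2 h1
            simp [hgdef, hydef, restr, h1, h2]
        have G1 := hbkey g g Tstar Tstar hTstarcard hTstarcard hgsupp hgsupp
        have G2 := hbkey g y Tstar Tstarᶜ hTstarcard hcc hgsupp hysupp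
        have G3 := hbkey y g Tstarᶜ Tstar hcc hTstarcard hysupp hgsupp
        have G4 := hbkey y y Tstarᶜ Tstarᶜ hcc hcc hysupp hysupp
        have hng := hsubnrm Tstar
        have hny := hsubnrm Tstarᶜ
        have hng0 := nrm_nonneg g
        have hny0 := nrm_nonneg y
        have habs : |α ⬝ᵥ Δ *ᵥ α| ≤
            (|g ⬝ᵥ Δ *ᵥ g| + |g ⬝ᵥ Δ *ᵥ y|) + (|y ⬝ᵥ Δ *ᵥ g| + |y ⬝ᵥ Δ *ᵥ y|) := by
          have e : α ⬝ᵥ Δ *ᵥ α =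
              (g ⬝ᵥ Δ *ᵥ g + g ⬝ᵥ Δ *ᵥ y) + (y ⬝ᵥ Δ *ᵥ g + y ⬝ᵥ Δ *ᵥ y) := by
            rw [hsplit, Matrix.mulVec_add, add_dotProduct,
              dotProduct_add, dotProduct_add]
          rw [e]
          exact (abs_add_le _ _).trans (add_le_add (abs_add_le _ _) (abs_add_le _ _))
        have B1 : nrm g * nrm g * M ≤ M :=
          mul_mul_le_of_le_one hng0 hng hng0 hng hM0
        have B2 : nrm g * nrm y * M ≤ M :=
          mul_mul_le_of_le_one hng0 hng hny0 hny hM0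
        have B2' : nrm y * nrm g * M ≤ M :=
          mul_mul_le_of_le_one hny0 hny hng0 hng hM0
        have B3 : nrm y * nrm y * M ≤ M :=
          mul_mul_le_of_le_one hny0 hny hny0 hny hM0
        have hM529 : 4 * M ≤ 529 * M := by linarith only [hM0]
        linarith only [habs, G1, G2, G3, G4, B1, B2, B2', B3, hM529]
      · -- big complement: peel off the top chunk
        push_neg at hcc
        obtain ⟨T1, hT1S, hT1card, hT1top⟩ := exists_top Tstarᶜ (blk α) sstar hcc.le
        set S' := Tstarᶜ \ T1 with hS'def
        set z := restr α T1 with hzdef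
        set r := restr α S' with hrdef
        have hzsupp : ∀ p : Fin d × Fin m, p.1 ∉ T1 → z p = 0 := restr_support α T1
        have hrsupp : ∀ p : Fin d × Fin m, p.1 ∉ S' → r p = 0 := restr_support α S'
        have hsplit : α = g + z + r := by
          funext p
          show α p = g p + z p + r p
          by_cases h1 : p.1 ∈ Tstar
          · have h2 : p.1 ∉ T1 := fun hc =>
              (Finset.mem_compl.1 (hT1S hc)) h1
            have h3 : p.1 ∉ S' := fun hc =>
              (Finset.mem_compl.1 (Finset.mem_sdiff.1 hc).1) h1
            simp [hgdef, hzdef, hrdef, restr, h1, h2, h3]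
          · have h2 : p.1 ∈ Tstarᶜ := Finset.mem_compl.2 h1
            by_cases h3 : p.1 ∈ T1
            · have h4 : p.1 ∉ S' := by simp [hS'def, h3]
              simp [hgdef, hzdef, hrdef, restr, h1, h3, h4]
            · have h4 : p.1 ∈ S' := Finset.mem_sdiff.2 ⟨h2, h3⟩
              simp [hgdef, hzdef, hrdef, restr, h1, h3, h4]
        set b' : ℝ := (∑ j ∈ T1, blk α j) / (sstar : ℝ) with hb'def
        have hSig1 : 0 ≤ ∑ j ∈ T1, blk α j :=
          Finset.sum_nonneg fun j _ => blk_nonneg α j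
        have hb'0 : 0 ≤ b' := div_nonneg hSig1 hspos.le
        have hblkr : ∀ j ∈ S', blk r j ≤ b' := by
          intro j hj
          rw [hrdef, blk_restr_mem α hj]
          have hsum : (sstar:ℝ) * blk α j ≤ ∑ i ∈ T1, blk α i := by
            calc (sstar:ℝ) * blk α j = ∑ _i ∈ T1, blk α j := by
                  rw [Finset.sum_const, hT1card, nsmul_eq_mul]
              _ ≤ ∑ i ∈ T1, blk α i := Finset.sum_le_sum fun i hi => hT1top i hi j hj
          rw [hb'def, le_div_iff₀ hspos]
          linarith
        obtain ⟨I1, I2⟩ := main_ind sstar Δ M hs hΔT hM0 hbkey S'.card S' le_rfl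
          r hrsupp b' hb'0 hblkr
        have hsum' : ∑ j ∈ S', blk r j = ∑ j ∈ S', blk α j :=
          Finset.sum_congr rfl fun j hj => by rw [hrdef, blk_restr_mem α hj]
        have hsplitS : ∑ j ∈ S', blk α j + ∑ j ∈ T1, blk α j = ∑ j ∈ Tstarᶜ, blk α j :=
          Finset.sum_sdiff hT1S
        have hw' : t * b' + (∑ j ∈ S', blk r j)/t = (∑ j ∈ Tstarᶜ, blk α j)/t := by
          rw [hsum', hb'def, ← hsplitS, ← ht2]
          field_simp
          ring
        rw [hw'] at I1 I2
        set c : ℝ := (∑ j ∈ Tstarᶜ, blk α j)/t with hcdef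
        have hSigC : 0 ≤ ∑ j ∈ Tstarᶜ, blk α j :=
          Finset.sum_nonneg fun j _ => blk_nonneg α j
        have hc0 : 0 ≤ c := div_nonneg hSigC ht.le
        have hc21 : c ≤ 21 := by
          rw [hcdef, div_le_iff₀ ht]
          linarith
        have hT1le : T1.card ≤ sstar := le_of_eq hT1card
        -- the nine bounds
        have G1 := hbkey g g Tstar Tstar hTstarcard hTstarcard hgsupp hgsupp
        have G2 := hbkey g z Tstar T1 hTstarcard hT1le hgsupp hzsupp
        have G3 := hbkey z g T1 Tstar hT1le hTstarcard hzsupp hgsupp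
        have G4 := hbkey z z T1 T1 hT1le hT1le hzsupp hzsupp
        have G5 : |g ⬝ᵥ Δ *ᵥ r| ≤ nrm g * c * M := I1 g Tstar hTstarcard hgsupp
        have G6 : |r ⬝ᵥ Δ *ᵥ g| ≤ nrm g * c * M := by
          rw [B_comm hΔT r g]; exact G5
        have G7 : |z ⬝ᵥ Δ *ᵥ r| ≤ nrm z * c * M := I1 z T1 hT1le hzsupp
        have G8 : |r ⬝ᵥ Δ *ᵥ z| ≤ nrm z * c * M := by
          rw [B_comm hΔT r z]; exact G7
        have G9 : |r ⬝ᵥ Δ *ᵥ r| ≤ c^2 * M := I2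
        -- expansion into nine terms
        have step : ∀ x : (Fin d × Fin m) → ℝ,
            |x ⬝ᵥ Δ *ᵥ α| ≤ |x ⬝ᵥ Δ *ᵥ g| + |x ⬝ᵥ Δ *ᵥ z| + |x ⬝ᵥ Δ *ᵥ r| := by
          intro x
          have e : x ⬝ᵥ Δ *ᵥ α = x ⬝ᵥ Δ *ᵥ g + x ⬝ᵥ Δ *ᵥ z + x ⬝ᵥ Δ *ᵥ r := by
            conv_lhs => rw [hsplit]
            rw [Matrix.mulVec_add, Matrix.mulVec_add, dotProduct_add,
              dotProduct_add]
          rw [e]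
          exact abs_add_three _ _ _
        have habs : |α ⬝ᵥ Δ *ᵥ α| ≤
            (|g ⬝ᵥ Δ *ᵥ g| + |g ⬝ᵥ Δ *ᵥ z| + |g ⬝ᵥ Δ *ᵥ r|) +
            (|z ⬝ᵥ Δ *ᵥ g| + |z ⬝ᵥ Δ *ᵥ z| + |z ⬝ᵥ Δ *ᵥ r|) +
            (|r ⬝ᵥ Δ *ᵥ g| + |r ⬝ᵥ Δ *ᵥ z| + |r ⬝ᵥ Δ *ᵥ r|) := by
          calc |α ⬝ᵥ Δ *ᵥ α| ≤
              |g ⬝ᵥ Δ *ᵥ α| + |z ⬝ᵥ Δ *ᵥ α| + |r ⬝ᵥ Δ *ᵥ α| := by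
                have e0 : α ⬝ᵥ Δ *ᵥ α =
                    g ⬝ᵥ Δ *ᵥ α + z ⬝ᵥ Δ *ᵥ α + r ⬝ᵥ Δ *ᵥ α := by
                  rw [hsplit, add_dotProduct, add_dotProduct]
                rw [e0]
                exact abs_add_three _ _ _
            _ ≤ _ := add_le_add (add_le_add (step g) (step z)) (step r)
        have hng := hsubnrm Tstar
        have hnz : nrm z ≤ 1 := hsubnrm T1
        have hng0 := nrm_nonneg g
        have hnz0 := nrm_nonneg z
        -- combine
        have hfinal : (nrm g + nrm z + c)^2 * M ≤ 529 * M := by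
          have hsum23 : nrm g + nrm z + c ≤ 23 := by
            linarith only [hng, hnz, hc21]
          have hsum0 : 0 ≤ nrm g + nrm z + c := by
            linarith only [hng0, hnz0, hc0]
          have hmul := mul_self_le_mul_self hsum0 hsum23
          have hsq : (nrm g + nrm z + c)^2 ≤ 529 := by
            rw [sq]; linarith only [hmul]
          exact mul_le_mul_of_nonneg_right hsq hM0
        have hexp : (nrm g + nrm z + c)^2 * M =
            (nrm g * nrm g * M + nrm g * nrm z * M + nrm g * c * M) +
            (nrm z * nrm g * M + nrm z * nrm z * M + nrm z * c * M) +
            (c * nrm g * M + c * nrm z * M + c^2 * M) := by ring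
        have hG2' : nrm g * nrm z * M = nrm z * nrm g * M := by ring
        have hG5' : nrm g * c * M = c * nrm g * M := by ring
        have hG7' : nrm z * c * M = c * nrm z * M := by ring
        linarith only [habs, G1, G2, G3, G4, G5, G6, G7, G8, G9,
          hexp, hfinal, hG2', hG5', hG7']
    -- now compare the two infima
    set SF := {r : ℝ | ∃ α ∈ C, (∑ p, (α p) ^ 2 = 1) ∧ r = α ⬝ᵥ Shat.mulVec α}
      with hSFdef
    set SG := {r : ℝ | ∃ α ∈ C, (∑ p, (α p) ^ 2 = 1) ∧ r = α ⬝ᵥ Spop.mulVec α}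
      with hSGdef
    have hSFne : SF.Nonempty := ⟨_, α₀, hα₀C, hα₀1, rfl⟩
    have hSGne : SG.Nonempty := ⟨_, α₀, hα₀C, hα₀1, rfl⟩
    have hSFbdd : BddBelow SF := by
      refine ⟨0, ?_⟩
      rintro rr ⟨α, hαC, hα1, rfl⟩
      simpa using hShat.dotProduct_mulVec_nonneg α
    have hSGbdd : BddBelow SG := by
      refine ⟨0, ?_⟩
      rintro rr ⟨α, hαC, hα1, rfl⟩
      simpa using hSpop.dotProduct_mulVec_nonneg α
    have hdiff : ∀ α, α ⬝ᵥ Shat.mulVec α - α ⬝ᵥ Spop.mulVec α = α ⬝ᵥ Δ *ᵥ α := by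
      intro α
      rw [hΔdef, Matrix.sub_mulVec, dotProduct_sub]
    have h1 : κhatSq ≤ κSq + 529 * M := by
      rw [hκhat, hκ]
      have hstep : ∀ rG ∈ SG, sInf SF - 529 * M ≤ rG := by
        rintro rG ⟨α, hαC, hα1, rfl⟩
        have hF : sInf SF ≤ α ⬝ᵥ Shat.mulVec α := csInf_le hSFbdd ⟨α, hαC, hα1, rfl⟩
        have hd := hkeyest α hαC hα1
        have habs := (abs_le.1 hd).2
        have hdf := hdiff α
        linarith only [hF, habs, hdf]
      have hle := le_csInf hSGne hstep
      linarith only [hle]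
    have h2 : κSq ≤ κhatSq + 529 * M := by
      rw [hκhat, hκ]
      have hstep : ∀ rF ∈ SF, sInf SG - 529 * M ≤ rF := by
        rintro rF ⟨α, hαC, hα1, rfl⟩
        have hF : sInf SG ≤ α ⬝ᵥ Spop.mulVec α := csInf_le hSGbdd ⟨α, hαC, hα1, rfl⟩
        have hd := hkeyest α hαC hα1
        have habs := (abs_le.1 hd).1
        have hdf := hdiff α
        linarith only [hF, habs, hdf]
      have hle := le_csInf hSFne hstep
      linarith only [hle]
    have h23 : (23:ℝ) ^ 2 * M = 529 * M := by norm_num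
    rw [abs_sub_le_iff]
    exact ⟨by linarith only [h1, h23], by linarith only [h2, h23]⟩
  · -- empty feasible set
    have hSF : {r : ℝ | ∃ α ∈ C, (∑ p, (α p) ^ 2 = 1) ∧ r = α ⬝ᵥ Shat.mulVec α}
        = (∅ : Set ℝ) := by
      ext rr
      simp only [Set.mem_setOf_eq, Set.mem_empty_iff_false, iff_false]
      rintro ⟨α, hαC, hα1, _⟩
      exact hA ⟨α, hαC, hα1⟩
    have hSG : {r : ℝ | ∃ α ∈ C, (∑ p, (α p) ^ 2 = 1) ∧ r = α ⬝ᵥ Spop.mulVec α}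
        = (∅ : Set ℝ) := by
      ext rr
      simp only [Set.mem_setOf_eq, Set.mem_empty_iff_false, iff_false]
      rintro ⟨α, hαC, hα1, _⟩
      exact hA ⟨α, hαC, hα1⟩
    rw [hκhat, hκ, hSF, hSG, Real.sInf_empty, sub_self, abs_zero]
    linarith only [hM0]
end

section
/- Let f ∈ W_2^ν([0,1]) for a positive integer ν, and let Q be a probability measure on [0,1] such that the ν×ν moment matrix Σ_{Q,ν} = E_{Z∼Q}[(1, Z, ..., Z^{ν−1})'(1, Z, ..., Z^{ν−1})] is nonsingular. Then there exist functions f^{[1]} and f^{[2]} on [0,1] such that: (i) f = f^{[1]} + f^{[2]}; (ii) ||f^{[1]}||_∞ ≤ K·I(f^{[1]}) for a constant K depending only on Q and ν (not on f), where I(g)² = ∫_0^1 g^{(ν)}(z)² dz; (iii) f^{[2]} is a polynomial of degree at most ν−1; (iv) ∫ f^{[1]} f^{[2]} dQ = 0. -/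
open MeasureTheory Set

lemma aux_abs_intInt (u : ℝ → ℝ) (hm : Measurable u)
    (h2 : IntervalIntegrable (fun z => u z ^ 2) volume 0 1) :
    IntervalIntegrable (fun z => |u z|) volume 0 1 := by
  have hc : IntervalIntegrable (fun z => (1 + u z ^ 2) / 2) volume 0 1 :=
    ((intervalIntegrable_const).add h2).div_const 2
  refine hc.mono_fun (hm.abs.aestronglyMeasurable) ?_
  refine Filter.Eventually.of_forall (fun x => ?_)
  have h1 : (0:ℝ) ≤ (1 + u x ^ 2) / 2 := by positivity
  simp only [Real.norm_eq_abs, abs_abs, abs_of_nonneg h1]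
  nlinarith [sq_nonneg (|u x| - 1), sq_abs (u x)]

lemma aux_cs (u : ℝ → ℝ) (hm : Measurable u)
    (h2 : IntervalIntegrable (fun z => u z ^ 2) volume 0 1) :
    (∫ z in (0:ℝ)..1, |u z|) ≤ Real.sqrt (∫ z in (0:ℝ)..1, u z ^ 2) := by
  set S := ∫ z in (0:ℝ)..1, u z ^ 2 with hS
  set I := ∫ z in (0:ℝ)..1, |u z| with hI
  have hS0 : 0 ≤ S := intervalIntegral.integral_nonneg (by norm_num) (fun x _ => sq_nonneg _)
  have habs := aux_abs_intInt u hm h2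
  have key : ∀ t : ℝ, 0 < t → I ≤ (t * S + 1 / t) / 2 := by
    intro t ht
    have hint : IntervalIntegrable (fun z => (t * u z ^ 2 + 1 / t) / 2) volume 0 1 :=
      ((h2.const_mul t).add intervalIntegrable_const).div_const 2
    have hmono : I ≤ ∫ z in (0:ℝ)..1, (t * u z ^ 2 + 1 / t) / 2 := by
      refine intervalIntegral.integral_mono_on (by norm_num) habs hint (fun x _ => ?_)
      have h := sq_nonneg (t * |u x| - 1)
      have h2' : t * |u x| * (t * |u x|) = t^2 * u x ^2 := by
        rw [mul_mul_mul_comm]; rw [← sq, ← sq, sq_abs]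
      have h3 : 2 * t * |u x| ≤ t ^ 2 * u x ^ 2 + 1 := by nlinarith
      have h4 : t * (t * u x ^ 2 + 1 / t) = t ^ 2 * u x ^ 2 + 1 := by
        field_simp
      have h5 : t * (2 * |u x|) ≤ t * (t * u x ^ 2 + 1 / t) := by
        rw [h4]; linarith
      have h6 := (mul_le_mul_iff_right₀ ht).mp h5
      linarith
    have hcomp : (∫ z in (0:ℝ)..1, (t * u z ^ 2 + 1 / t) / 2) = (t * S + 1 / t) / 2 := by
      rw [intervalIntegral.integral_div, intervalIntegral.integral_add (h2.const_mul t)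
        intervalIntegrable_const, intervalIntegral.integral_const_mul,
        intervalIntegral.integral_const]
      norm_num
      exact Or.inl rfl
    rw [hcomp] at hmono; exact hmono
  rcases eq_or_lt_of_le hS0 with hS0' | hSpos
  · have hI0 : I ≤ 0 := by
      by_contra h
      push_neg at h
      have := key (1 / I) (by positivity)
      rw [← hS0'] at this
      simp only [one_div, inv_inv, mul_zero] at this
      linarith
    exact hI0.trans (Real.sqrt_nonneg _)
  · have hs := Real.sqrt_pos.mpr hSpos
    have := key (1 / Real.sqrt S) (by positivity)
    have hdiv : (1 / Real.sqrt S) * S = Real.sqrt S := by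
      rw [one_div, inv_mul_eq_div, Real.div_sqrt]
    rw [hdiv] at this
    simp only [one_div, inv_inv] at this
    linarith

lemma aux_poly_iterDeriv (k : ℕ) (q : Polynomial ℝ) :
    iteratedDeriv k (fun z => q.eval z) = fun z => ((Polynomial.derivative)^[k] q).eval z := by
  induction k with
  | zero => simp [iteratedDeriv_zero]
  | succ k ih =>
    rw [iteratedDeriv_succ, ih]
    funext z
    rw [Function.iterate_succ_apply']
    exact Polynomial.deriv _

lemma aux_iterDeriv_sub_poly (f : ℝ → ℝ) (ν : ℕ)
    (hf : ∀ k < ν, DifferentiableOn ℝ (iteratedDeriv k f) (Set.Icc (0:ℝ) 1))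
    (q : Polynomial ℝ) (k : ℕ) (hk : k ≤ ν) :
    ∀ z ∈ Set.Ioo (0:ℝ) 1,
      iteratedDeriv k (fun w => f w - q.eval w) z
        = iteratedDeriv k f z - ((Polynomial.derivative)^[k] q).eval z := by
  induction k with
  | zero => intro z _; simp
  | succ k ih =>
    intro z hz
    have hk' : k < ν := lt_of_lt_of_le (Nat.lt_succ_self k) hk
    have ih' := ih (le_of_lt hk')
    have heq : iteratedDeriv k (fun w => f w - q.eval w)
        =ᶠ[nhds z] fun w => iteratedDeriv k f w - ((Polynomial.derivative)^[k] q).eval w := by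
      refine Filter.eventuallyEq_of_mem (Ioo_mem_nhds hz.1 hz.2) (fun w hw => ih' w hw)
    rw [iteratedDeriv_succ, heq.deriv_eq]
    have hdf : DifferentiableAt ℝ (iteratedDeriv k f) z :=
      (hf k hk').differentiableAt (Icc_mem_nhds hz.1 hz.2)
    have hdq : DifferentiableAt ℝ (fun w => ((Polynomial.derivative)^[k] q).eval w) z :=
      (Polynomial.hasDerivAt _ z).differentiableAt
    rw [deriv_fun_sub hdf hdq, iteratedDeriv_succ]
    congr 1
    rw [Function.iterate_succ_apply']
    exact Polynomial.deriv _

lemma aux_ftc (c : ℝ) (hc : c ∈ Set.Icc (0:ℝ) 1) (F G : ℝ → ℝ)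
    (hFc : ContinuousOn F (Set.Icc (0:ℝ) 1))
    (hFG : ∀ x ∈ Set.Ioo (0:ℝ) 1, HasDerivAt F (G x) x)
    (hGi : IntervalIntegrable G volume 0 1) :
    ∀ z ∈ Set.Icc (0:ℝ) 1, (∫ t in c..z, G t) = F z - F c := by
  intro z hz
  have hsub : ∀ a b : ℝ, a ∈ Set.Icc (0:ℝ) 1 → b ∈ Set.Icc (0:ℝ) 1 → a ≤ b →
      (∫ t in a..b, G t) = F b - F a := by
    intro a b ha hb hab
    refine intervalIntegral.integral_eq_sub_of_hasDeriv_right_of_le hab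
      (hFc.mono (Icc_subset_Icc ha.1 hb.2)) (fun x hx => ?_) ?_
    · exact (hFG x ⟨lt_of_le_of_lt ha.1 hx.1, lt_of_lt_of_le hx.2 hb.2⟩).hasDerivWithinAt
    · refine hGi.mono_set ?_
      rw [Set.uIcc_of_le hab, Set.uIcc_of_le (by norm_num : (0:ℝ) ≤ 1)]
      exact Icc_subset_Icc ha.1 hb.2
  rcases le_total c z with h | h
  · exact hsub c z hc hz h
  · rw [intervalIntegral.integral_symm, hsub z c hz hc h]; ring

lemma aux_uIoc_sub {c z : ℝ} (hc : c ∈ Set.Icc (0:ℝ) 1) (hz : z ∈ Set.Icc (0:ℝ) 1) :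
    Set.uIoc c z ⊆ Set.Icc (0:ℝ) 1 := by
  intro y hy
  rw [Set.uIoc] at hy
  exact ⟨le_trans (le_min hc.1 hz.1) (le_of_lt hy.1), le_trans hy.2 (max_le hc.2 hz.2)⟩

lemma aux_step (c : ℝ) (hc : c ∈ Set.Icc (0:ℝ) 1) (φ ψ : ℝ → ℝ) (B : ℝ) (hB : 0 ≤ B)
    (hφc : ContinuousOn φ (Set.Icc (0:ℝ) 1)) (hψc : ContinuousOn ψ (Set.Icc (0:ℝ) 1))
    (hd : ∀ z ∈ Set.Ioo (0:ℝ) 1, HasDerivAt φ (ψ z) z)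
    (hφ0 : φ c = 0) (hψB : ∀ z ∈ Set.Icc (0:ℝ) 1, |ψ z| ≤ B) :
    ∀ z ∈ Set.Icc (0:ℝ) 1, |φ z| ≤ B := by
  intro z hz
  have hψi : IntervalIntegrable ψ volume 0 1 := by
    apply ContinuousOn.intervalIntegrable
    rwa [Set.uIcc_of_le (by norm_num : (0:ℝ) ≤ 1)]
  have hftc := aux_ftc c hc φ ψ hφc hd hψi z hz
  rw [hφ0, sub_zero] at hftc
  rw [← hftc]
  have hb : ‖∫ t in c..z, ψ t‖ ≤ B * |z - c| :=
    intervalIntegral.norm_integral_le_of_norm_le_const (f := ψ) (C := B)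
      (fun x hx => by rw [Real.norm_eq_abs]; exact hψB x (aux_uIoc_sub hc hz hx))
  rw [Real.norm_eq_abs] at hb
  refine hb.trans ?_
  have habs : |z - c| ≤ 1 := by
    rw [abs_le]; constructor <;> [linarith [hz.1, hc.2]; linarith [hz.2, hc.1]]
  nlinarith

lemma aux_taylor (ν : ℕ) (hν : 0 < ν) (f : ℝ → ℝ)
    (hf : ∀ k < ν, DifferentiableOn ℝ (iteratedDeriv k f) (Set.Icc (0:ℝ) 1))
    (hint : IntervalIntegrable (fun z => (iteratedDeriv ν f z) ^ 2) volume 0 1) :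
    ∃ T : Polynomial ℝ, T.natDegree ≤ ν - 1 ∧
      ∀ z ∈ Set.Icc (0:ℝ) 1, |f z - T.eval z|
        ≤ Real.sqrt (∫ z in (0:ℝ)..1, (iteratedDeriv ν f z) ^ 2) := by
  set c : ℝ := 1/2 with hcdef
  have hc : c ∈ Set.Icc (0:ℝ) 1 := by constructor <;> norm_num
  set g : ℕ → ℝ → ℝ := fun k => iteratedDeriv k f with hgdef
  set B : ℝ := ∫ z in (0:ℝ)..1, |g ν z| with hBdef
  -- measurability of g ν
  have hgm : Measurable (g ν) := by
    have h1 : g ν = deriv (g (ν - 1)) := by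
      simp only [hgdef]
      conv_lhs => rw [show ν = (ν - 1) + 1 by omega]
      exact iteratedDeriv_succ
    rw [h1]; exact measurable_deriv _
  have habs : IntervalIntegrable (fun z => |g ν z|) volume 0 1 := aux_abs_intInt _ hgm hint
  have hgi : IntervalIntegrable (g ν) volume 0 1 := by
    refine habs.mono_fun hgm.aestronglyMeasurable ?_
    refine Filter.Eventually.of_forall (fun x => ?_)
    simp [Real.norm_eq_abs]
  have hB0 : 0 ≤ B := intervalIntegral.integral_nonneg (by norm_num) (fun x _ => abs_nonneg _)
  have hBM : B ≤ Real.sqrt (∫ z in (0:ℝ)..1, (g ν z) ^ 2) := aux_cs _ hgm hint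
  -- continuity of g k
  have hcontg : ∀ k, k < ν → ContinuousOn (g k) (Set.Icc (0:ℝ) 1) :=
    fun k hk => (hf k hk).continuousOn
  -- derivative of g k at interior points
  have hder : ∀ k, k + 1 ≤ ν → ∀ z ∈ Set.Ioo (0:ℝ) 1, HasDerivAt (g k) (g (k+1) z) z := by
    intro k hk z hz
    have hd := (hf k (by omega)).differentiableAt (Icc_mem_nhds hz.1 hz.2)
    have h1 : g (k+1) z = deriv (g k) z := by
      simp only [hgdef]; rw [iteratedDeriv_succ]
    rw [h1]
    exact hd.hasDerivAt
  -- continuity of the partial Taylor sums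
  have hScont : ∀ j : ℕ, Continuous (fun w : ℝ =>
      ∑ k ∈ Finset.range (ν - j), g (j+k) c * (w - c)^k / (Nat.factorial k : ℝ)) := by
    intro j
    refine continuous_finset_sum _ (fun k _ => ?_)
    exact (continuous_const.mul ((continuous_id.sub continuous_const).pow k)).div_const _
  -- value of partial sums at c
  have hSc : ∀ j : ℕ, j < ν →
      (∑ k ∈ Finset.range (ν - j), g (j+k) c * (c - c)^k / (Nat.factorial k : ℝ)) = g j c := by
    intro j hj
    rw [show ν - j = (ν - (j+1)) + 1 by omega, Finset.sum_range_succ']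
    simp [sub_self]
  -- main downward induction
  have claim : ∀ m, m ≤ ν - 1 → ∀ z ∈ Set.Icc (0:ℝ) 1,
      |g (ν-1-m) z - ∑ k ∈ Finset.range (ν - (ν-1-m)),
        g ((ν-1-m)+k) c * (z - c)^k / (Nat.factorial k : ℝ)| ≤ B := by
    intro m
    induction m with
    | zero =>
      intro _ z hz
      have h1 : ν - (ν - 1 - 0) = 1 := by omega
      have hsum : (∑ k ∈ Finset.range (ν - (ν-1-0)),
          g ((ν-1-0)+k) c * (z - c)^k / (Nat.factorial k : ℝ)) = g (ν-1) c := by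
        rw [h1, Finset.sum_range_one]; simp
      rw [hsum]
      have hftc := aux_ftc c hc (g (ν-1)) (g ν) (hcontg (ν-1) (by omega))
        (by
          intro x hx
          have := hder (ν-1) (by omega) x hx
          rwa [show ν - 1 + 1 = ν by omega] at this) hgi z hz
      rw [show ν - 1 - 0 = ν - 1 by omega, ← hftc]
      calc |∫ t in c..z, g ν t| ≤ ∫ t in Set.uIoc c z, |g ν t| := by
            have := intervalIntegral.norm_integral_le_integral_norm_uIoc
              (a := c) (b := z) (f := g ν) (μ := volume)
            simpa [Real.norm_eq_abs] using this
        _ ≤ ∫ t in Set.Ioc (0:ℝ) 1, |g ν t| := by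
            refine setIntegral_mono_set habs.1 ?_ ?_
            · exact Filter.Eventually.of_forall (fun x => abs_nonneg _)
            · refine HasSubset.Subset.eventuallyLE ?_
              intro y hy
              rw [Set.mem_uIoc] at hy
              rcases hy with ⟨hy1, hy2⟩ | ⟨hy1, hy2⟩
              · exact ⟨lt_of_le_of_lt hc.1 hy1, le_trans hy2 hz.2⟩
              · exact ⟨lt_of_le_of_lt hz.1 hy1, le_trans hy2 hc.2⟩
        _ = B := (intervalIntegral.integral_of_le (by norm_num)).symm
    | succ m ih =>
      intro hm z hz
      set j : ℕ := ν - 1 - (m+1) with hjdef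
      have hj1 : ν - 1 - m = j + 1 := by omega
      have hjν : j + 1 < ν ∨ j + 1 = ν - 1 + 1 := by omega
      have hjlt : j + 1 ≤ ν - 1 := by omega
      have ih' : ∀ z ∈ Set.Icc (0:ℝ) 1, |g (j+1) z - ∑ k ∈ Finset.range (ν - (j+1)),
          g ((j+1)+k) c * (z - c)^k / (Nat.factorial k : ℝ)| ≤ B := by
        rw [← hj1]; exact ih (by omega)
      refine aux_step c hc
        (fun w => g j w - ∑ k ∈ Finset.range (ν - j), g (j+k) c * (w - c)^k / (Nat.factorial k : ℝ))
        (fun w => g (j+1) w - ∑ k ∈ Finset.range (ν - (j+1)), g ((j+1)+k) c * (w - c)^k / (Nat.factorial k : ℝ))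
        B hB0 ?_ ?_ ?_ ?_ ih' z hz
      · exact (hcontg j (by omega)).sub (hScont j).continuousOn
      · exact (hcontg (j+1) (by omega)).sub (hScont (j+1)).continuousOn
      · intro w hw
        have hgde : HasDerivAt (g j) (g (j+1) w) w := hder j (by omega) w hw
        have hterm : ∀ k ∈ Finset.range (ν - j),
            HasDerivAt (fun y : ℝ => g (j+k) c * (y - c)^k / (Nat.factorial k : ℝ))
              (g (j+k) c * ((k:ℝ) * (w - c)^(k-1) * 1) / (Nat.factorial k : ℝ)) w := by
          intro k _
          have h1 : HasDerivAt (fun y : ℝ => y - c) 1 w := (hasDerivAt_id w).sub_const c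
          have h2 : HasDerivAt (fun y : ℝ => (y - c)^k) ((k:ℝ) * (w - c)^(k-1) * 1) w :=
            (hasDerivAt_pow k (w - c)).comp w h1
          exact (h2.const_mul _).div_const _
        have hsum := HasDerivAt.fun_sum hterm
        have hre : (∑ k ∈ Finset.range (ν - j),
            g (j+k) c * ((k:ℝ) * (w - c)^(k-1) * 1) / (Nat.factorial k : ℝ))
            = ∑ k ∈ Finset.range (ν - (j+1)), g ((j+1)+k) c * (w - c)^k / (Nat.factorial k : ℝ) := by
          rw [show ν - j = (ν - (j+1)) + 1 by omega, Finset.sum_range_succ']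
          simp only [Nat.cast_zero, zero_mul, mul_zero, zero_div, add_zero, mul_one,
            Nat.cast_ofNat, Nat.add_sub_cancel]
          refine Finset.sum_congr rfl (fun k _ => ?_)
          rw [show j + (k+1) = j + 1 + k by omega]
          have hfac : ((Nat.factorial (k+1)) : ℝ) = ((k:ℝ)+1) * (Nat.factorial k : ℝ) := by
            rw [Nat.factorial_succ]; push_cast; ring
          rw [hfac]
          have hk0 : (Nat.factorial k : ℝ) ≠ 0 := Nat.cast_ne_zero.mpr (Nat.factorial_ne_zero k)
          push_cast
          field_simp
        exact hgde.sub (hre ▸ hsum)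
      · show g j c - ∑ k ∈ Finset.range (ν - j), g (j+k) c * (c - c)^k / (Nat.factorial k : ℝ) = 0
        rw [hSc j (by omega), sub_self]
  -- conclude with m = ν - 1
  have h0 := claim (ν-1) le_rfl
  rw [show ν - 1 - (ν-1) = 0 by omega] at h0
  refine ⟨∑ k ∈ Finset.range ν, Polynomial.C (g k c / (Nat.factorial k : ℝ))
      * (Polynomial.X - Polynomial.C c)^k, ?_, ?_⟩
  · refine Polynomial.natDegree_sum_le_of_forall_le _ _ (fun k hk => ?_)
    have h1 : ((Polynomial.X - Polynomial.C c)^k).natDegree ≤ k := by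
      refine le_trans Polynomial.natDegree_pow_le ?_
      rw [Polynomial.natDegree_X_sub_C, mul_one]
    refine le_trans Polynomial.natDegree_mul_le ?_
    rw [Polynomial.natDegree_C]
    have := Finset.mem_range.mp hk
    omega
  · intro z hz
    have hev : Polynomial.eval z (∑ k ∈ Finset.range ν, Polynomial.C (g k c / (Nat.factorial k : ℝ))
        * (Polynomial.X - Polynomial.C c)^k)
        = ∑ k ∈ Finset.range (ν - 0), g (0+k) c * (z - c)^k / (Nat.factorial k : ℝ) := by
      rw [Polynomial.eval_finset_sum, show ν - 0 = ν by omega]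
      refine Finset.sum_congr rfl (fun k _ => ?_)
      simp only [Polynomial.eval_mul, Polynomial.eval_pow, Polynomial.eval_sub,
        Polynomial.eval_X, Polynomial.eval_C, zero_add]
      ring
    have := h0 z hz
    rw [hgdef] at this
    simp only [iteratedDeriv_zero] at this
    rw [hev]
    exact le_trans this hBM

/-- decomposition of a Sobolev function `f ∈ W₂^ν([0,1])` as
`f = f¹ + f²` with `‖f¹‖_∞ ≤ K · I(f¹)`, `f²` a polynomial of degree ≤ ν−1,
and `∫ f¹ f² dQ = 0`, where `Q` is a probability measure on `[0,1]` whose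
moment matrix `Σ_{Q,ν}` is nonsingular; the constant `K` depends only on `Q`
and `ν`.  Membership in `W₂^ν([0,1])` is formalized by requiring that the
iterated derivatives of order `< ν` exist on `[0,1]` and that the `ν`-th
derivative is square-integrable on `[0,1]`. -/
theorem stmt_4
    (ν : ℕ) (hν : 0 < ν)
    (Q : Measure ℝ) [IsProbabilityMeasure Q]
    (hQsupp : Q (Set.Icc (0 : ℝ) 1)ᶜ = 0)
    (hdet : (Matrix.of fun i j : Fin ν =>
      ∫ z, z ^ ((i : ℕ) + (j : ℕ)) ∂Q).det ≠ 0) :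
    ∃ K > 0, ∀ f : ℝ → ℝ,
      (∀ k < ν, DifferentiableOn ℝ (iteratedDeriv k f) (Set.Icc (0 : ℝ) 1)) →
      IntervalIntegrable (fun z => (iteratedDeriv ν f z) ^ 2) volume 0 1 →
      ∃ f₁ f₂ : ℝ → ℝ,
        (∀ z ∈ Set.Icc (0 : ℝ) 1, f z = f₁ z + f₂ z) ∧
        (∀ z ∈ Set.Icc (0 : ℝ) 1,
          |f₁ z| ≤ K * Real.sqrt (∫ z in (0 : ℝ)..1, (iteratedDeriv ν f₁ z) ^ 2)) ∧
        (∃ p : Polynomial ℝ, p.natDegree ≤ ν - 1 ∧ ∀ z, f₂ z = p.eval z) ∧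
        (∫ z, f₁ z * f₂ z ∂Q) = 0 := by
  classical
  set Sm : Matrix (Fin ν) (Fin ν) ℝ := Matrix.of (fun i j : Fin ν =>
    ∫ z, z ^ ((i : ℕ) + (j : ℕ)) ∂Q) with hSm
  set A : Matrix (Fin ν) (Fin ν) ℝ := Sm⁻¹ with hAdef
  set C₀ : ℝ := ∑ i : Fin ν, ∑ j : Fin ν, |A i j| with hC₀
  have hC₀0 : 0 ≤ C₀ := Finset.sum_nonneg fun i _ => Finset.sum_nonneg fun j _ => abs_nonneg _
  refine ⟨1 + ν * C₀, by positivity, ?_⟩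
  intro f hf hint
  -- a.e. membership in Icc
  have hae : ∀ᵐ z ∂Q, z ∈ Set.Icc (0:ℝ) 1 := by
    refine MeasureTheory.mem_ae_iff.mpr ?_
    have : {z : ℝ | z ∈ Set.Icc (0:ℝ) 1}ᶜ = (Set.Icc (0:ℝ) 1)ᶜ := rfl
    rw [this]
    exact hQsupp
  -- integrability of ContinuousOn functions wrt Q
  have hIntQ : ∀ u : ℝ → ℝ, ContinuousOn u (Set.Icc (0:ℝ) 1) → Integrable u Q := by
    intro u hu
    set cl : ℝ → ℝ := fun z => max 0 (min 1 z) with hcl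
    have hclc : Continuous cl := continuous_const.max (continuous_const.min continuous_id)
    have hclmem : ∀ z, cl z ∈ Set.Icc (0:ℝ) 1 := fun z =>
      ⟨le_max_left _ _, max_le (by norm_num) (min_le_left _ _)⟩
    have hclid : ∀ z ∈ Set.Icc (0:ℝ) 1, cl z = z := by
      intro z hz
      simp only [hcl]
      rw [min_eq_right hz.2, max_eq_right hz.1]
    have hcont2 : Continuous (fun z => u (cl z)) := hu.comp_continuous hclc hclmem
    have haeeq : (fun z => u (cl z)) =ᵐ[Q] u := by
      filter_upwards [hae] with z hz
      rw [hclid z hz]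
    obtain ⟨x₀, hx₀, hmax⟩ := isCompact_Icc.exists_isMaxOn (s := Set.Icc (0:ℝ) 1)
      ⟨0, Set.mem_Icc.mpr (by norm_num)⟩ hu.abs
    refine Integrable.congr ?_ haeeq
    refine Integrable.mono' (integrable_const (|u x₀|)) hcont2.aestronglyMeasurable ?_
    refine Filter.Eventually.of_forall (fun z => ?_)
    rw [Real.norm_eq_abs]
    exact hmax (hclmem z)
  -- Taylor decomposition
  obtain ⟨T, hTdeg, hTbd⟩ := aux_taylor ν hν f hf hint
  set M : ℝ := Real.sqrt (∫ z in (0:ℝ)..1, (iteratedDeriv ν f z)^2) with hM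
  have hM0 : 0 ≤ M := Real.sqrt_nonneg _
  set R : ℝ → ℝ := fun z => f z - T.eval z with hR
  have hfc : ContinuousOn f (Set.Icc (0:ℝ) 1) := by
    have := (hf 0 hν).continuousOn
    rwa [iteratedDeriv_zero] at this
  have hRc : ContinuousOn R (Set.Icc (0:ℝ) 1) := hfc.sub (T.continuous).continuousOn
  set b : Fin ν → ℝ := fun j => ∫ z, R z * z^(j:ℕ) ∂Q with hbdef
  set a : Fin ν → ℝ := A.mulVec b with hadef
  set p : Polynomial ℝ := ∑ i : Fin ν, Polynomial.C (a i) * Polynomial.X^(i:ℕ) with hpdef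
  have hIRj : ∀ n : ℕ, Integrable (fun z => R z * z^n) Q := fun n =>
    hIntQ _ (hRc.mul (continuous_pow n).continuousOn)
  have hIpj : ∀ n : ℕ, Integrable (fun z => p.eval z * z^n) Q := fun n =>
    hIntQ _ ((p.continuous).continuousOn.mul (continuous_pow n).continuousOn)
  have hImom : ∀ n : ℕ, Integrable (fun z => z^n) Q := fun n =>
    hIntQ _ (continuous_pow n).continuousOn
  have hzpow1 : ∀ z ∈ Set.Icc (0:ℝ) 1, ∀ n : ℕ, |z ^ n| ≤ 1 := by
    intro z hz n
    rw [abs_pow]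
    exact pow_le_one₀ (abs_nonneg z) (abs_le.mpr ⟨by linarith [hz.1], hz.2⟩)
  -- bound on b
  have hbB : ∀ j : Fin ν, |b j| ≤ M := by
    intro j
    have h1 : ∀ᵐ z ∂Q, ‖R z * z^(j:ℕ)‖ ≤ M := by
      filter_upwards [hae] with z hz
      rw [Real.norm_eq_abs, abs_mul]
      calc |R z| * |z^(j:ℕ)| ≤ M * 1 :=
            mul_le_mul (hTbd z hz) (hzpow1 z hz _) (abs_nonneg _) hM0
        _ = M := mul_one M
    have h2 := MeasureTheory.norm_integral_le_of_norm_le_const h1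
    rw [probReal_univ] at h2
    simpa [Real.norm_eq_abs] using h2
  -- bound on a
  have haC : ∀ i : Fin ν, |a i| ≤ C₀ * M := by
    intro i
    have h1 : a i = ∑ j : Fin ν, A i j * b j := rfl
    rw [h1]
    calc |∑ j : Fin ν, A i j * b j| ≤ ∑ j : Fin ν, |A i j * b j| :=
          Finset.abs_sum_le_sum_abs _ _
      _ ≤ ∑ j : Fin ν, |A i j| * M := by
          refine Finset.sum_le_sum fun j _ => ?_
          rw [abs_mul]
          exact mul_le_mul_of_nonneg_left (hbB j) (abs_nonneg _)
      _ = (∑ j : Fin ν, |A i j|) * M := by rw [Finset.sum_mul]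
      _ ≤ C₀ * M := by
          refine mul_le_mul_of_nonneg_right ?_ hM0
          exact Finset.single_le_sum (f := fun i => ∑ j : Fin ν, |A i j|)
            (fun i _ => Finset.sum_nonneg fun j _ => abs_nonneg _) (Finset.mem_univ i)
  have hpeval : ∀ z : ℝ, p.eval z = ∑ i : Fin ν, a i * z^(i:ℕ) := by
    intro z
    rw [hpdef, Polynomial.eval_finset_sum]
    simp
  have hpbd : ∀ z ∈ Set.Icc (0:ℝ) 1, |p.eval z| ≤ ν * (C₀ * M) := by
    intro z hz
    rw [hpeval]
    calc |∑ i : Fin ν, a i * z^(i:ℕ)| ≤ ∑ i : Fin ν, |a i * z^(i:ℕ)| :=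
          Finset.abs_sum_le_sum_abs _ _
      _ ≤ ∑ _i : Fin ν, C₀ * M := by
          refine Finset.sum_le_sum fun i _ => ?_
          rw [abs_mul]
          calc |a i| * |z^(i:ℕ)| ≤ (C₀ * M) * 1 :=
                mul_le_mul (haC i) (hzpow1 z hz _) (abs_nonneg _) (by positivity)
            _ = C₀ * M := mul_one _
      _ = ν * (C₀ * M) := by
          rw [Finset.sum_const, Finset.card_univ, Fintype.card_fin]
          simp [nsmul_eq_mul]
  have hpdeg : p.natDegree ≤ ν - 1 := by
    refine Polynomial.natDegree_sum_le_of_forall_le _ _ (fun i _ => ?_)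
    refine le_trans Polynomial.natDegree_mul_le ?_
    rw [Polynomial.natDegree_C, Polynomial.natDegree_X_pow]
    have := i.isLt
    omega
  have hdegTp : (T + p).natDegree < ν := by
    have h1 := Polynomial.natDegree_add_le T p
    have h2 : T.natDegree ⊔ p.natDegree ≤ ν - 1 := sup_le hTdeg hpdeg
    omega
  -- orthogonality to monomials
  have horthj : ∀ j : Fin ν, ∫ z, (f z - (T+p).eval z) * z^(j:ℕ) ∂Q = 0 := by
    intro j
    have hsplit : (fun z => (f z - (T+p).eval z) * z^(j:ℕ))
        = fun z => R z * z^(j:ℕ) - p.eval z * z^(j:ℕ) := by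
      funext z
      rw [Polynomial.eval_add, hR]
      ring
    rw [hsplit, integral_sub (hIRj j) (hIpj j)]
    have h2 : ∫ z, p.eval z * z^(j:ℕ) ∂Q = ∑ i : Fin ν, a i * ∫ z, z^((i:ℕ)+(j:ℕ)) ∂Q := by
      have he : (fun z : ℝ => p.eval z * z^(j:ℕ))
          = fun z => ∑ i : Fin ν, a i * z^((i:ℕ)+(j:ℕ)) := by
        funext z
        rw [hpeval, Finset.sum_mul]
        refine Finset.sum_congr rfl fun i _ => ?_
        rw [pow_add]
        ring
      rw [he, integral_finset_sum _ (fun i _ => (hImom _).const_mul _)]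
      refine Finset.sum_congr rfl fun i _ => ?_
      exact MeasureTheory.integral_const_mul _ _
    rw [h2]
    have h3 : ∑ i : Fin ν, a i * ∫ z, z^((i:ℕ)+(j:ℕ)) ∂Q = Sm.mulVec a j := by
      simp only [Matrix.mulVec, dotProduct, hSm, Matrix.of_apply]
      refine Finset.sum_congr rfl fun i _ => ?_
      rw [add_comm (i:ℕ) (j:ℕ), mul_comm]
    have h4 : Sm.mulVec a = b := by
      rw [hadef, Matrix.mulVec_mulVec, Matrix.mul_nonsing_inv _ (isUnit_iff_ne_zero.mpr hdet),
        Matrix.one_mulVec]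
    rw [h3, h4, sub_self]
  -- the squared integral is unchanged
  have hMeq : (∫ z in (0:ℝ)..1, (iteratedDeriv ν (fun w => f w - (T+p).eval w) z)^2)
      = ∫ z in (0:ℝ)..1, (iteratedDeriv ν f z)^2 := by
    refine intervalIntegral.integral_congr_ae ?_
    have h1 : ({(1:ℝ)} : Set ℝ)ᶜ ∈ ae (volume : Measure ℝ) := compl_mem_ae_iff.mpr Real.volume_singleton
    filter_upwards [h1] with x hx hmem
    rw [Set.uIoc_of_le (by norm_num : (0:ℝ) ≤ 1)] at hmem
    have hne : x ≠ 1 := fun h => hx (by simp [h])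
    have hx1 : x ∈ Set.Ioo (0:ℝ) 1 := ⟨hmem.1, lt_of_le_of_ne hmem.2 hne⟩
    rw [aux_iterDeriv_sub_poly f ν hf (T+p) ν le_rfl x hx1,
      Polynomial.iterate_derivative_eq_zero hdegTp]
    simp
  refine ⟨fun z => f z - (T+p).eval z, fun z => (T+p).eval z, ?_, ?_, ?_, ?_⟩
  · intro z _; ring
  · intro z hz
    rw [hMeq]
    have hcalc : |f z - (T+p).eval z| ≤ M + ν * (C₀ * M) := by
      have h1 : f z - (T+p).eval z = R z - p.eval z := by
        rw [hR, Polynomial.eval_add]; ring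
      rw [h1]
      calc |R z - p.eval z| ≤ |R z| + |p.eval z| := abs_sub _ _
        _ ≤ M + ν * (C₀ * M) := add_le_add (hTbd z hz) (hpbd z hz)
    calc |f z - (T+p).eval z| ≤ M + ν * (C₀ * M) := hcalc
      _ = (1 + ν * C₀) * M := by ring
  · exact ⟨T + p, le_trans (Polynomial.natDegree_add_le T p) (sup_le hTdeg hpdeg),
      fun z => rfl⟩
  · have hcoeff : ∀ z : ℝ, (T+p).eval z = ∑ i ∈ Finset.range ν, (T+p).coeff i * z^i :=
      fun z => Polynomial.eval_eq_sum_range' hdegTp z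
    have hIf1 : ∀ n : ℕ, Integrable (fun z => (f z - (T+p).eval z) * z^n) Q := fun n =>
      hIntQ _ ((hfc.sub ((T+p).continuous).continuousOn).mul (continuous_pow n).continuousOn)
    calc ∫ z, (f z - (T+p).eval z) * (T+p).eval z ∂Q
        = ∫ z, ∑ i ∈ Finset.range ν, (T+p).coeff i * ((f z - (T+p).eval z) * z^i) ∂Q := by
          congr 1
          funext z
          rw [hcoeff z, Finset.mul_sum]
          exact Finset.sum_congr rfl fun i _ => by ring
      _ = ∑ i ∈ Finset.range ν, ∫ z, (T+p).coeff i * ((f z - (T+p).eval z) * z^i) ∂Q :=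
          integral_finset_sum _ (fun i _ => (hIf1 i).const_mul _)
      _ = 0 := by
          refine Finset.sum_eq_zero fun i hi => ?_
          rw [MeasureTheory.integral_const_mul]
          have := horthj ⟨i, Finset.mem_range.mp hi⟩
          simp only [Fin.val_mk] at this
          rw [this, mul_zero]
end
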